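/- arXiv:2402.02307 — 5 statements merged into one kernel-verified Lean document; each statement's English description precedes it below -/
import Mathlib

section
/- Let L, N be positive integers with N ≥ 2 and let S ∈ ℂ^{L×N} be a matrix with nonzero columns s_1, …, s_N. Let Ŝ ∈ ℂ^{L²×N} be the column-wise Khatri–Rao product of the entrywise conjugate of S with S, i.e., the i-th column of Ŝ is conj(s_i) ⊗ s_i. Then the coherence of Ŝ equals the square of the coherence of S: μ(Ŝ) = μ(S)². -/
open ComplexConjugate

noncomputable section

/-- Complex inner product `⟨x, y⟩ = Σ_k conj(x_k) y_k`. -/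
def cinner {L : ℕ} (x y : Fin L → ℂ) : ℂ := ∑ k, conj (x k) * y k

/-- Euclidean norm. -/
def cnorm {L : ℕ} (x : Fin L → ℂ) : ℝ := Real.sqrt (∑ k, ‖x k‖ ^ 2)

/-- Coherence of a matrix given by its columns. -/
def coherence {L : ℕ} {ι : Type} (s : ι → Fin L → ℂ) : ℝ :=
  sSup {r : ℝ | ∃ k l : ι, k ≠ l ∧
    r = ‖cinner (s k) (s l)‖ / (cnorm (s k) * cnorm (s l))}

/-- Kronecker product of vectors, `(a ⊗ b)_{iL + j} = a_i b_j`. -/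
def kron {L : ℕ} (a b : Fin L → ℂ) : Fin (L * L) → ℂ := fun k =>
  a ⟨k.val / L, Nat.div_lt_of_lt_mul k.isLt⟩ *
  b ⟨k.val % L, Nat.mod_lt _ (by
      rcases Nat.eq_zero_or_pos L with h | h
      · exact absurd k.isLt (by simp [h])
      · exact h)⟩

/- ### Auxiliary lemmas -/

lemma kron_apply {L : ℕ} (a b : Fin L → ℂ) (k : Fin (L*L)) :
    kron a b k = a k.divNat * b k.modNat := rfl

lemma divNat_eq {L : ℕ} (i j : Fin L) : (finProdFinEquiv (i, j)).divNat = i := by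
  ext
  simp [Fin.coe_divNat, finProdFinEquiv, Nat.add_mul_div_left _ _ (Fin.pos j),
    Nat.div_eq_of_lt j.isLt]

lemma modNat_eq {L : ℕ} (i j : Fin L) : (finProdFinEquiv (i, j)).modNat = j := by
  ext
  simp [Fin.coe_modNat, finProdFinEquiv, Nat.add_mul_mod_self_left, Nat.mod_eq_of_lt j.isLt]

lemma cinner_kron {L : ℕ} (a b c d : Fin L → ℂ) :
    cinner (kron a b) (kron c d) = cinner a c * cinner b d := by
  unfold cinner
  rw [Finset.sum_mul_sum, ← Equiv.sum_comp (finProdFinEquiv (m := L) (n := L)),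
    Fintype.sum_prod_type]
  congr 1; ext i; congr 1; ext j
  rw [kron_apply, kron_apply, divNat_eq, modNat_eq, map_mul]
  ring

lemma cnorm_kron {L : ℕ} (a b : Fin L → ℂ) :
    cnorm (kron a b) = cnorm a * cnorm b := by
  unfold cnorm
  rw [← Real.sqrt_mul (by positivity)]
  congr 1
  rw [Finset.sum_mul_sum, ← Equiv.sum_comp (finProdFinEquiv (m := L) (n := L)),
    Fintype.sum_prod_type]
  congr 1; ext i; congr 1; ext j
  rw [kron_apply, divNat_eq, modNat_eq, norm_mul]
  ring

lemma cinner_conj {L : ℕ} (a b : Fin L → ℂ) :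
    cinner (fun k => conj (a k)) (fun k => conj (b k)) = conj (cinner a b) := by
  simp [cinner, map_sum, mul_comm]

lemma cnorm_conj {L : ℕ} (a : Fin L → ℂ) : cnorm (fun k => conj (a k)) = cnorm a := by
  simp [cnorm]

lemma sSup_sq_image (A : Set ℝ) (hne : A.Nonempty) (hnn : ∀ a ∈ A, 0 ≤ a)
    (hbdd : BddAbove A) :
    sSup ((fun x => x ^ 2) '' A) = (sSup A) ^ 2 := by
  obtain ⟨a₀, ha₀⟩ := hne
  have h0 : 0 ≤ sSup A := (hnn a₀ ha₀).trans (le_csSup hbdd ha₀)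
  have hub : ∀ y ∈ (fun x => x ^ 2) '' A, y ≤ (sSup A) ^ 2 := by
    rintro _ ⟨a, ha, rfl⟩
    exact pow_le_pow_left₀ (hnn a ha) (le_csSup hbdd ha) 2
  have hbdd' : BddAbove ((fun x => x ^ 2) '' A) := ⟨(sSup A) ^ 2, hub⟩
  have hS0 : 0 ≤ sSup ((fun x => x ^ 2) '' A) :=
    le_trans (by positivity) (le_csSup hbdd' ⟨a₀, ha₀, rfl⟩)
  refine le_antisymm (csSup_le ⟨a₀ ^ 2, ⟨a₀, ha₀, rfl⟩⟩ hub) ?_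
  have : sSup A ≤ Real.sqrt (sSup ((fun x => x ^ 2) '' A)) := by
    refine csSup_le ⟨a₀, ha₀⟩ fun a ha => ?_
    have h1 : a ^ 2 ≤ sSup ((fun x => x ^ 2) '' A) := le_csSup hbdd' ⟨a, ha, rfl⟩
    calc a = Real.sqrt (a ^ 2) := (Real.sqrt_sq (hnn a ha)).symm
    _ ≤ _ := Real.sqrt_le_sqrt h1
  calc (sSup A) ^ 2 ≤ Real.sqrt (sSup ((fun x => x ^ 2) '' A)) ^ 2 :=
        pow_le_pow_left₀ h0 this 2
  _ = _ := Real.sq_sqrt hS0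

/-- the coherence of the column-wise Khatri–Rao product `Ŝ` (whose `i`-th
column is `conj(s_i) ⊗ s_i`) equals the square of the coherence of `S`. -/
theorem coherence_khatriRao_eq_sq (L N : ℕ) (hL : 0 < L) (hN : 2 ≤ N)
    (s : Fin N → Fin L → ℂ) (hs : ∀ i, s i ≠ 0) :
    coherence (fun i => kron (fun k => conj (s i k)) (s i)) = (coherence s) ^ 2 := by
  set f : Fin N → Fin N → ℝ := fun k l =>
    ‖cinner (s k) (s l)‖ / (cnorm (s k) * cnorm (s l)) with hf
  have key : ∀ k l : Fin N,
      ‖cinner (kron (fun j => conj (s k j)) (s k))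
          (kron (fun j => conj (s l j)) (s l))‖ /
        (cnorm (kron (fun j => conj (s k j)) (s k)) *
          cnorm (kron (fun j => conj (s l j)) (s l))) = f k l ^ 2 := by
    intro k l
    rw [cinner_kron, cinner_conj, cnorm_kron, cnorm_kron, cnorm_conj, cnorm_conj,
      norm_mul, Complex.norm_conj, hf]
    rw [div_pow, mul_pow, sq ‖cinner (s k) (s l)‖, sq (cnorm (s k)), sq (cnorm (s l))]
  have hA : {r : ℝ | ∃ k l : Fin N, k ≠ l ∧
      r = ‖cinner (kron (fun j => conj (s k j)) (s k))
          (kron (fun j => conj (s l j)) (s l))‖ /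
        (cnorm (kron (fun j => conj (s k j)) (s k)) *
          cnorm (kron (fun j => conj (s l j)) (s l)))}
      = (fun x => x ^ 2) '' {r : ℝ | ∃ k l : Fin N, k ≠ l ∧ r = f k l} := by
    ext r
    constructor
    · rintro ⟨k, l, h, rfl⟩
      exact ⟨f k l, ⟨k, l, h, rfl⟩, (key k l).symm⟩
    · rintro ⟨x, ⟨k, l, h, rfl⟩, rfl⟩
      exact ⟨k, l, h, (key k l).symm⟩
  unfold coherence
  rw [hA]
  apply sSup_sq_image
  · refine ⟨f ⟨0, by omega⟩ ⟨1, by omega⟩, ⟨0, by omega⟩, ⟨1, by omega⟩, ?_, rfl⟩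
    simp [Fin.ext_iff]
  · rintro _ ⟨k, l, h, rfl⟩
    exact div_nonneg (norm_nonneg _)
      (mul_nonneg (Real.sqrt_nonneg _) (Real.sqrt_nonneg _))
  · refine Set.Finite.bddAbove (Set.Finite.subset
      (Set.finite_range (fun p : Fin N × Fin N => f p.1 p.2)) ?_)
    rintro _ ⟨k, l, h, rfl⟩
    exact ⟨(k, l), rfl⟩

end
end

section
/- Let L be an odd prime. For λ ∈ {0, …, L−1} and c ∈ {0, …, L−1} define φ_{λ,c} ∈ ℂ^L by φ_{λ,c}(k) = (1/√L) · e^{2πi(λ k² − c k)/L} for k ∈ {0, …, L−1}. Then each φ_{λ,c} has unit ℓ²-norm, and for all pairs (λ,c) ≠ (λ',c'), |⟨φ_{λ,c}, φ_{λ',c'}⟩| ≤ 1/√L. Consequently, the coherence of the L × L² matrix with columns φ_{λ,c} is at most 1/√L. -/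
open ComplexConjugate

noncomputable section

namespace QCChelp

noncomputable def zet (L : ℕ) : ℂ := Complex.exp (2 * Real.pi * Complex.I / L)

lemma zet_prim {L : ℕ} (hL : L ≠ 0) : IsPrimitiveRoot (zet L) L :=
  Complex.isPrimitiveRoot_exp L hL

lemma zet_zpow (L : ℕ) (m : ℤ) :
    zet L ^ m = Complex.exp (2 * Real.pi * Complex.I * m / L) := by
  rw [zet, ← Complex.exp_int_mul]
  congr 1
  ring

lemma zet_ne_zero (L : ℕ) : zet L ≠ 0 := Complex.exp_ne_zero _

lemma zet_abs (L : ℕ) (m : ℤ) : ‖zet L ^ m‖ = 1 := by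
  rw [zet_zpow]
  have : 2 * (Real.pi:ℂ) * Complex.I * m / L = ((2 * Real.pi * m / L : ℝ) : ℂ) * Complex.I := by
    push_cast; ring
  rw [this, Complex.norm_exp_ofReal_mul_I]

lemma zet_conj (L : ℕ) (m : ℤ) : conj (zet L ^ m) = zet L ^ (-m) := by
  rw [zet_zpow, zet_zpow, ← Complex.exp_conj]
  congr 1
  have : (2 * (Real.pi:ℂ) * Complex.I * m / L) = (((2 * Real.pi * m / L : ℝ)) : ℂ) * Complex.I := by
    push_cast; ring
  rw [this, map_mul, Complex.conj_I, Complex.conj_ofReal]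
  push_cast
  ring

lemma zet_one_iff {L : ℕ} (hL : L ≠ 0) (m : ℤ) : zet L ^ m = 1 ↔ (L:ℤ) ∣ m :=
  (zet_prim hL).zpow_eq_one_iff_dvd m

lemma zet_congr {L : ℕ} (hL : L ≠ 0) {m n : ℤ} (h : m ≡ n [ZMOD L]) :
    zet L ^ m = zet L ^ n := by
  have h1 : zet L ^ (m - n) = 1 := (zet_one_iff hL _).2 (Int.ModEq.dvd h.symm)
  have := zpow_sub₀ (zet_ne_zero L) m n
  rw [this] at h1
  have h2 := div_eq_one_iff_eq (a := zet L ^ m) (zpow_ne_zero n (zet_ne_zero L))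
  exact h2.1 h1

lemma zet_geom {L : ℕ} (hL : L ≠ 0) (m : ℤ) :
    ∑ k : Fin L, zet L ^ (m * (k : ℕ)) = if (L:ℤ) ∣ m then (L:ℂ) else 0 := by
  have hrw : ∀ k : Fin L, zet L ^ (m * (k:ℕ)) = (zet L ^ m) ^ (k:ℕ) := by
    intro k
    rw [← zpow_natCast (zet L ^ m) (k:ℕ), ← zpow_mul]
  simp_rw [hrw]
  rw [Fin.sum_univ_eq_sum_range (fun i => (zet L ^ m) ^ i)]
  by_cases h : (L:ℤ) ∣ m
  · rw [if_pos h, (zet_one_iff hL m).2 h]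
    simp
  · rw [if_neg h]
    have hne : zet L ^ m ≠ 1 := fun hc => h ((zet_one_iff hL m).1 hc)
    rw [geom_sum_eq hne]
    have : (zet L ^ m) ^ L = 1 := by
      rw [← zpow_natCast (zet L ^ m) L, ← zpow_mul, mul_comm]
      exact (zet_one_iff hL _).2 ⟨m, rfl⟩
    rw [this]
    simp

end QCChelp

open QCChelp

/-- for odd prime `L`, the quadratic-chirp masked DFT columns
`φ_{λ,c}(k) = (1/√L) e^{2πi(λk² − ck)/L}` have unit norm and pairwise inner products of
magnitude at most `1/√L`; consequently the coherence of the `L × L²` matrix is at most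
`1/√L`. -/
theorem quadratic_chirp_coherence (L : ℕ) (hp : Nat.Prime L) (hodd : Odd L) :
    let φ : Fin L × Fin L → Fin L → ℂ := fun lc k =>
      (1 / Real.sqrt L) * Complex.exp (2 * (Real.pi : ℂ) * Complex.I *
        ((lc.1.val : ℂ) * (k.val : ℂ) ^ 2 - (lc.2.val : ℂ) * (k.val : ℂ)) / (L : ℂ))
    (∀ lc, cnorm (φ lc) = 1) ∧
    (∀ lc lc' : Fin L × Fin L, lc ≠ lc' →
      ‖cinner (φ lc) (φ lc')‖ ≤ 1 / Real.sqrt L) ∧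
    coherence φ ≤ 1 / Real.sqrt L := by
  intro φ
  haveI : NeZero L := ⟨hp.ne_zero⟩
  have hL0 : L ≠ 0 := hp.ne_zero
  have hLpos : (0:ℝ) < L := by exact_mod_cast hp.pos
  have hsq : Real.sqrt L * Real.sqrt L = L := Real.mul_self_sqrt hLpos.le
  have hsqrt_pos : 0 < Real.sqrt L := Real.sqrt_pos.2 hLpos
  have hφ : ∀ (lc : Fin L × Fin L) (k : Fin L),
      φ lc k = ((1 / Real.sqrt L : ℝ) : ℂ) *
        zet L ^ ((lc.1.val : ℤ) * (k.val:ℤ)^2 - (lc.2.val:ℤ) * (k.val:ℤ)) := by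
    intro lc k
    show (1 / (Real.sqrt L : ℂ)) * Complex.exp (2 * (Real.pi : ℂ) * Complex.I *
        ((lc.1.val : ℂ) * (k.val : ℂ) ^ 2 - (lc.2.val : ℂ) * (k.val : ℂ)) / (L : ℂ)) = _
    rw [zet_zpow]
    congr 1
    · push_cast; ring
    · congr 1; push_cast; ring
  -- unit norms
  have hnorm : ∀ lc, cnorm (φ lc) = 1 := by
    intro lc
    rw [cnorm]
    have habs : ∀ k : Fin L, ‖φ lc k‖ ^ 2 = 1 / L := by
      intro k
      rw [hφ, norm_mul, zet_abs, mul_one, Complex.norm_real, Real.norm_eq_abs,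
        abs_of_nonneg (by positivity), div_pow, one_pow, Real.sq_sqrt hLpos.le]
    simp_rw [habs]
    rw [Finset.sum_const, Finset.card_univ, Fintype.card_fin, nsmul_eq_mul,
      mul_one_div, div_self (ne_of_gt hLpos), Real.sqrt_one]
  -- inner products
  have hinner : ∀ lc lc' : Fin L × Fin L, lc ≠ lc' →
      ‖cinner (φ lc) (φ lc')‖ ≤ 1 / Real.sqrt L := by
    intro lc lc' hne
    set a : ℤ := (lc'.1.val : ℤ) - lc.1.val with ha
    set b : ℤ := (lc.2.val : ℤ) - lc'.2.val with hb
    have hterm : ∀ k : Fin L, conj (φ lc k) * φ lc' k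
        = ((1 / L : ℝ):ℂ) * zet L ^ (a * (k.val:ℤ)^2 + b * (k.val:ℤ)) := by
      intro k
      rw [hφ lc k, hφ lc' k, map_mul, Complex.conj_ofReal, zet_conj,
        mul_mul_mul_comm, ← zpow_add₀ (zet_ne_zero L)]
      congr 1
      · rw [← Complex.ofReal_mul]
        congr 1
        rw [div_mul_div_comm, one_mul, hsq]
      · rw [ha, hb]; ring
    have hinner_eq : cinner (φ lc) (φ lc')
        = ((1/L:ℝ):ℂ) * ∑ k : Fin L, zet L ^ (a*(k.val:ℤ)^2 + b*(k.val:ℤ)) := by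
      rw [cinner]
      simp_rw [hterm]
      rw [← Finset.mul_sum]
    set S := ∑ k : Fin L, zet L ^ (a*(k.val:ℤ)^2 + b*(k.val:ℤ)) with hS
    by_cases hll : lc.1 = lc'.1
    · -- a = 0, b ≢ 0
      have ha0 : a = 0 := by rw [ha, hll]; ring
      have hcc : lc.2 ≠ lc'.2 := fun h => hne (Prod.ext hll h)
      have hb0 : ¬ (L:ℤ) ∣ b := by
        intro hdvd
        have h1 : (lc.2.val : ℤ) < L := by exact_mod_cast lc.2.isLt
        have h2 : (lc'.2.val : ℤ) < L := by exact_mod_cast lc'.2.isLt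
        have hbne : b ≠ 0 := by
          rw [hb]
          intro h
          exact hcc (Fin.ext (by omega))
        have hlt : b.natAbs < L := by
          rw [hb] at hbne ⊢
          omega
        have : L ∣ b.natAbs := by
          rwa [Int.natCast_dvd] at hdvd
        have := Nat.le_of_dvd (Nat.pos_of_ne_zero (fun h => hbne (by omega))) this
        omega
      have hS0 : S = 0 := by
        rw [hS]
        have he : ∀ k : Fin L, a*(k.val:ℤ)^2 + b*(k.val:ℤ) = b * (k.val:ℤ) := by
          intro k; rw [ha0]; ring
        simp_rw [he]
        rw [zet_geom hL0, if_neg hb0]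
      rw [hinner_eq, hS0, mul_zero, norm_zero]
      positivity
    · -- a ≢ 0 mod L
      have haL : ¬ (L:ℤ) ∣ a := by
        intro hdvd
        have h1 : (lc.1.val : ℤ) < L := by exact_mod_cast lc.1.isLt
        have h2 : (lc'.1.val : ℤ) < L := by exact_mod_cast lc'.1.isLt
        have hane : a ≠ 0 := by
          rw [ha]
          intro h
          exact hll (Fin.ext (by omega)).symm
        have hlt : a.natAbs < L := by
          rw [ha] at hane ⊢
          omega
        have : L ∣ a.natAbs := by rwa [Int.natCast_dvd] at hdvd
        have := Nat.le_of_dvd (Nat.pos_of_ne_zero (fun h => hane (by omega))) this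
        omega
      have hL2 : L ≠ 2 := by
        rintro rfl
        exact (by decide : ¬ Odd 2) hodd
      have hdd : ∀ d : Fin L, d ≠ 0 → ¬ (L:ℤ) ∣ (2 * a * (d.val:ℤ)) := by
        intro d hd hdvd
        have hLprime : Prime (L:ℤ) := Nat.prime_iff_prime_int.mp hp
        rcases hLprime.dvd_mul.1 hdvd with h | h
        · rcases hLprime.dvd_mul.1 h with h2 | h2
          · have h3 : L ∣ 2 := by exact_mod_cast h2
            have := Nat.le_of_dvd (by norm_num) h3
            have := hp.two_le
            omega
          · exact haL h2
        · have h3 : L ∣ d.val := by exact_mod_cast h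
          have h4 : d.val = 0 := by
            by_contra hzz
            exact absurd (Nat.le_of_dvd (Nat.pos_of_ne_zero hzz) h3) (by have := d.isLt; omega)
          exact hd (Fin.ext h4)
      have hmul : S * conj S = (L:ℂ) := by
        have hconjS : conj S = ∑ l : Fin L, zet L ^ (-(a*(l.val:ℤ)^2 + b*(l.val:ℤ))) := by
          rw [hS, map_sum]
          simp_rw [zet_conj]
        rw [hconjS, hS, Finset.sum_mul_sum]
        have step1 : ∀ k l : Fin L,
            zet L ^ (a*(k.val:ℤ)^2+b*(k.val:ℤ)) * zet L ^ (-(a*(l.val:ℤ)^2+b*(l.val:ℤ)))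
            = zet L ^ ((a*(k.val:ℤ)^2+b*(k.val:ℤ)) - (a*(l.val:ℤ)^2+b*(l.val:ℤ))) := by
          intro k l
          rw [← zpow_add₀ (zet_ne_zero L), sub_eq_add_neg]
        simp_rw [step1]
        rw [Finset.sum_comm]
        have step2 : ∀ l : Fin L,
            (∑ k : Fin L, zet L ^ ((a*(k.val:ℤ)^2+b*(k.val:ℤ)) - (a*(l.val:ℤ)^2+b*(l.val:ℤ))))
          = ∑ d : Fin L, zet L ^ ((2*a*(d.val:ℤ)) * (l.val:ℤ)) * zet L ^ (a*(d.val:ℤ)^2 + b*(d.val:ℤ)) := by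
          intro l
          rw [← Equiv.sum_comp (Equiv.addLeft l)
            (fun k : Fin L => zet L ^ ((a*(k.val:ℤ)^2+b*(k.val:ℤ)) - (a*(l.val:ℤ)^2+b*(l.val:ℤ))))]
          apply Finset.sum_congr rfl
          intro d _
          have hadd : Equiv.addLeft l d = l + d := rfl
          rw [hadd]
          have hu : (((l + d : Fin L).val :ℤ)) ≡ (l.val:ℤ) + (d.val:ℤ) [ZMOD (L:ℤ)] := by
            have hv : ((l + d : Fin L).val : ℤ) = (((l.val + d.val) % L : ℕ) : ℤ) := by
              rw [Fin.val_add]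
            rw [hv]
            push_cast
            exact Int.mod_modEq _ _
          have h2 : a*((l + d : Fin L).val:ℤ)^2 + b*((l + d : Fin L).val:ℤ)
              ≡ a*((l.val:ℤ)+(d.val:ℤ))^2 + b*((l.val:ℤ)+(d.val:ℤ)) [ZMOD (L:ℤ)] :=
            ((hu.pow 2).mul_left a).add (hu.mul_left b)
          have hcong : (a*((l + d : Fin L).val:ℤ)^2 + b*((l + d : Fin L).val:ℤ))
                - (a*(l.val:ℤ)^2+b*(l.val:ℤ))
              ≡ (2*a*(d.val:ℤ))*(l.val:ℤ) + (a*(d.val:ℤ)^2+b*(d.val:ℤ)) [ZMOD (L:ℤ)] := by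
            calc (a*((l + d : Fin L).val:ℤ)^2 + b*((l + d : Fin L).val:ℤ))
                - (a*(l.val:ℤ)^2+b*(l.val:ℤ))
                ≡ (a*((l.val:ℤ)+(d.val:ℤ))^2 + b*((l.val:ℤ)+(d.val:ℤ)))
                  - (a*(l.val:ℤ)^2+b*(l.val:ℤ)) [ZMOD (L:ℤ)] := h2.sub_right _
              _ = (2*a*(d.val:ℤ))*(l.val:ℤ) + (a*(d.val:ℤ)^2+b*(d.val:ℤ)) := by ring
          rw [zet_congr hL0 hcong, zpow_add₀ (zet_ne_zero L)]
        rw [Finset.sum_congr rfl (fun l _ => step2 l), Finset.sum_comm]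
        have step3 : ∀ d : Fin L,
            (∑ l : Fin L, zet L ^ ((2*a*(d.val:ℤ)) * (l.val:ℤ)) * zet L ^ (a*(d.val:ℤ)^2 + b*(d.val:ℤ)))
            = (if (L:ℤ) ∣ (2*a*(d.val:ℤ)) then (L:ℂ) else 0) * zet L ^ (a*(d.val:ℤ)^2 + b*(d.val:ℤ)) := by
          intro d
          rw [← Finset.sum_mul, zet_geom hL0]
        rw [Finset.sum_congr rfl (fun d _ => step3 d)]
        rw [Finset.sum_eq_single (0 : Fin L)]
        · have h0 : ((0 : Fin L).val : ℤ) = 0 := by simp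
          rw [h0]
          rw [if_pos (by exact ⟨0, by ring⟩)]
          norm_num
        · intro d _ hd
          rw [if_neg (hdd d hd), zero_mul]
        · intro h
          exact absurd (Finset.mem_univ _) h
      have habsS : ‖S‖ = Real.sqrt L := by
        have h2 : (Complex.normSq S : ℂ) = (L:ℂ) := by rw [← Complex.mul_conj, hmul]
        have h3 : Complex.normSq S = (L:ℝ) := by exact_mod_cast h2
        have h1 : ‖S‖^2 = (L:ℝ) := by rw [Complex.sq_norm, h3]
        rw [← Real.sqrt_sq (norm_nonneg S), h1]
      rw [hinner_eq, norm_mul, habsS, Complex.norm_real, Real.norm_eq_abs, abs_of_nonneg (by positivity)]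
      have heq : (1/(L:ℝ)) * Real.sqrt L = 1 / Real.sqrt L := by
        rw [div_mul_eq_mul_div, one_mul, div_eq_div_iff hLpos.ne' hsqrt_pos.ne', one_mul]
        exact hsq
      exact le_of_eq heq
  refine ⟨hnorm, hinner, ?_⟩
  apply Real.sSup_le
  · rintro r ⟨k, l, hkl, rfl⟩
    rw [hnorm k, hnorm l, mul_one, div_one]
    exact hinner k l hkl
  · positivity


end
end

section
/- Let L be an odd prime, let α be a primitive root modulo L, and let H > 2 be an integer dividing L − 1. Define log_α : {0, …, L−1} → ℤ by log_α(x) = t for x ≢ 0 (mod L), where t is the unique integer in {0, …, L−2} with α^t ≡ x (mod L), and log_α(0) = 0. For λ ∈ {1, …, H−1} and c ∈ {0, …, L−1} define φ_{λ,c} ∈ ℂ^L by φ_{λ,c}(k) = (1/√L) · e^{2πi λ log_α(k)/H} · e^{−2πi kc/L} for k ∈ {0, …, L−1}. Then for all pairs (λ,c) ≠ (λ',c'), |⟨φ_{λ,c}, φ_{λ',c'}⟩| ≤ (√L + 1)/L. -/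
open ComplexConjugate

open Complex in
private lemma prmib_exp_nat_modEq {H n : ℕ} (hdvd : H ∣ n) (μ : ℤ) {s t : ℕ}
    (hst : s ≡ t [MOD n]) (hH : (H : ℂ) ≠ 0) :
    Complex.exp (2*(Real.pi:ℂ)*I*μ*s/H) = Complex.exp (2*(Real.pi:ℂ)*I*μ*t/H) := by
  obtain ⟨h, rfl⟩ := hdvd
  have h1 : ((H*h : ℕ) : ℤ) ∣ (s : ℤ) - t := Int.ModEq.dvd (Int.natCast_modEq_iff.mpr hst.symm)
  obtain ⟨m, hm⟩ := h1
  have hc : (s : ℂ) - t = H * h * m := by exact_mod_cast congrArg (fun z : ℤ => (z : ℂ)) hm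
  rw [Complex.exp_eq_exp_iff_exists_int]
  refine ⟨μ * h * m, ?_⟩
  push_cast
  rw [div_add' _ _ _ hH, div_left_inj' hH]
  linear_combination (2*(Real.pi:ℂ)*I*μ) * hc

open Complex in
private lemma prmib_exists_mulChar (L H : ℕ) [Fact (Nat.Prime L)]
    (hH : 2 < H) (hdvd : H ∣ L - 1)
    (α : ZMod L) (hα : IsPrimitiveRoot α (L - 1))
    (logα : ZMod L → ℕ)
    (hlog : ∀ x : ZMod L, x ≠ 0 → logα x < L - 1 ∧ α ^ logα x = x)
    (μ : ℤ) (hμ0 : μ ≠ 0) (hμH : μ.natAbs < H) :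
    ∃ χ : MulChar (ZMod L) ℂ,
      (∀ x : ZMod L, x ≠ 0 → χ x = Complex.exp (2*(Real.pi:ℂ)*I*μ*((logα x : ℕ):ℂ)/H)) ∧
      χ ≠ 1 ∧ (∀ x : ZMod L, conj (χ x) = χ⁻¹ x) := by
  have hp : Nat.Prime L := Fact.out
  have hL1 : 1 < L := hp.one_lt
  have hn : 0 < L - 1 := by omega
  have hHn : H ≤ L - 1 := Nat.le_of_dvd hn hdvd
  have hHC : (H : ℂ) ≠ 0 := by exact_mod_cast (by omega : H ≠ 0)
  have hord : orderOf α = L - 1 := (hα.eq_orderOf).symm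
  set f : ZMod L → ℂ := fun x =>
    if x = 0 then 0 else Complex.exp (2*(Real.pi:ℂ)*I*μ*((logα x : ℕ):ℂ)/H) with hf
  have hfval : ∀ x : ZMod L, x ≠ 0 →
      f x = Complex.exp (2*(Real.pi:ℂ)*I*μ*((logα x : ℕ):ℂ)/H) := by
    intro x hx; rw [hf]; simp only [if_neg hx]
  have habs : ∀ x : ZMod L, x ≠ 0 → ‖f x‖ = 1 := by
    intro x hx
    rw [hfval x hx]
    rw [show 2*(Real.pi:ℂ)*I*μ*((logα x : ℕ):ℂ)/H
        = ((2*Real.pi*μ*(logα x)/H : ℝ) : ℂ) * I by push_cast; ring]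
    exact Complex.norm_exp_ofReal_mul_I _
  have hlog_one : logα 1 = 0 := by
    have h1 := hlog 1 one_ne_zero
    exact Nat.eq_zero_of_dvd_of_lt ((hα.pow_eq_one_iff_dvd (logα 1)).mp h1.2) h1.1
  have hf_one : f 1 = 1 := by
    rw [hfval 1 one_ne_zero, hlog_one]; simp
  have hf_mul : ∀ x y : ZMod L, f (x * y) = f x * f y := by
    intro x y
    by_cases hx : x = 0
    · rw [hf]; simp [hx]
    by_cases hy : y = 0
    · rw [hf]; simp [hy]
    have hxy : x * y ≠ 0 := mul_ne_zero hx hy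
    rw [hfval _ hxy, hfval _ hx, hfval _ hy, ← Complex.exp_add]
    have hmod : logα (x * y) ≡ logα x + logα y [MOD L - 1] := by
      have h1 : α ^ (logα (x * y) % (L - 1)) = α ^ ((logα x + logα y) % (L - 1)) := by
        conv_lhs => rw [← hord, pow_mod_orderOf]
        conv_rhs => rw [← hord, pow_mod_orderOf]
        rw [pow_add, (hlog x hx).2, (hlog y hy).2, (hlog _ hxy).2]
      exact hα.pow_inj (Nat.mod_lt _ hn) (Nat.mod_lt _ hn) h1
    rw [prmib_exp_nat_modEq hdvd μ hmod hHC]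
    congr 1
    push_cast
    ring
  set χ : MulChar (ZMod L) ℂ :=
    { toFun := f
      map_one' := hf_one
      map_mul' := hf_mul
      map_nonunit' := by
        intro a ha
        have h0 : a = 0 := by
          by_contra h
          exact ha (isUnit_iff_ne_zero.mpr h)
        subst h0
        show f 0 = 0
        rw [hf]; simp } with hχ
  have hχval : ∀ x : ZMod L, χ x = f x := fun _ => rfl
  have hα0 : α ≠ 0 := by
    intro h
    have := hα.pow_eq_one
    rw [h, zero_pow (by omega : L - 1 ≠ 0)] at this
    exact zero_ne_one this
  have hlogα : logα α = 1 := by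
    have h1 := hlog α hα0
    exact hα.pow_inj h1.1 (by omega) (by rw [h1.2, pow_one])
  refine ⟨χ, fun x hx => hfval x hx, ?_, ?_⟩
  · intro hone
    have h1 : χ α = 1 := by rw [hone]; exact MulChar.one_apply (isUnit_iff_ne_zero.mpr hα0)
    rw [hχval, hfval α hα0, hlogα] at h1
    rw [Complex.exp_eq_one_iff] at h1
    obtain ⟨n, hn1⟩ := h1
    have hne : (2*(Real.pi:ℂ)*I) ≠ 0 := by
      simp [Real.pi_ne_zero, Complex.I_ne_zero]
    have hμn : (μ : ℂ) = n * H := by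
      field_simp at hn1
      have h2 : (2*(Real.pi:ℂ)*I) * (μ : ℂ) = (2*(Real.pi:ℂ)*I) * (n * H) := by
        linear_combination (2*(Real.pi:ℂ)*I) * hn1
      exact mul_left_cancel₀ hne h2
    have hμn' : μ = n * H := by exact_mod_cast hμn
    have : (H : ℤ) ∣ μ := ⟨n, by rw [hμn']; ring⟩
    have hd : H ∣ μ.natAbs := Int.natCast_dvd_natCast.mp (by rwa [Int.dvd_natAbs])
    have : 0 < μ.natAbs := Int.natAbs_pos.mpr hμ0
    have := Nat.le_of_dvd this hd
    omega
  · intro x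
    by_cases hx : x = 0
    · rw [hx, MulChar.map_nonunit χ not_isUnit_zero, map_zero]
      exact (MulChar.map_nonunit χ⁻¹ not_isUnit_zero).symm
    · have hmulinv : χ x * χ x⁻¹ = 1 := by
        rw [← map_mul, mul_inv_cancel₀ hx, map_one]
      have hinv : χ⁻¹ x = (χ x)⁻¹ := by
        rw [MulChar.inv_apply' χ x]
        exact (inv_eq_of_mul_eq_one_right hmulinv).symm
      rw [hinv]
      show conj (f x) = (f x)⁻¹
      exact (Complex.inv_eq_conj (habs x hx)).symm

open Complex in
private lemma prmib_abs_gaussSum_eq (L : ℕ) [Fact (Nat.Prime L)] (χ : MulChar (ZMod L) ℂ)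
    (hχ : χ ≠ 1) (hconj : ∀ x : ZMod L, conj (χ x) = χ⁻¹ x) :
    ‖gaussSum χ (ZMod.stdAddChar (N := L))‖ = Real.sqrt L := by
  have hp : Nat.Prime L := Fact.out
  haveI : NeZero L := ⟨hp.pos.ne'⟩
  have hψ : (ZMod.stdAddChar (N := L)).IsPrimitive := ZMod.isPrimitive_stdAddChar L
  have key := gaussSum_mul_gaussSum_eq_card hχ hψ
  have hR : 0 < ringChar (ZMod L) := by rw [ZMod.ringChar_zmod_n]; exact hp.pos
  have hG : gaussSum χ⁻¹ (ZMod.stdAddChar (N := L))⁻¹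
      = conj (gaussSum χ (ZMod.stdAddChar (N := L))) := by
    rw [gaussSum, gaussSum, map_sum]
    refine Finset.sum_congr rfl (fun a _ => ?_)
    rw [map_mul, hconj, AddChar.starComp_apply hR]
  rw [hG, Complex.mul_conj] at key
  have hcard : (Fintype.card (ZMod L) : ℂ) = (L : ℂ) := by rw [ZMod.card]
  rw [hcard] at key
  have hnorm : Complex.normSq (gaussSum χ (ZMod.stdAddChar (N := L))) = L := by
    exact_mod_cast key
  rw [Complex.norm_def, hnorm]

noncomputable section

open Complex

/-- for odd prime `L`, a primitive root `α` mod `L`, `H > 2` dividing `L−1`,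
and the discrete logarithm `logα` (with `logα 0 = 0`), the power-residue masked DFT
columns `φ_{λ,c}(k) = (1/√L) e^{2πi λ logα(k)/H} e^{−2πi kc/L}`, `λ ∈ {1,…,H−1}`,
satisfy `|⟨φ_{λ,c}, φ_{λ',c'}⟩| ≤ (√L + 1)/L` for all `(λ,c) ≠ (λ',c')`. -/
theorem power_residue_mask_inner_bound (L H : ℕ) (hp : Nat.Prime L) (hodd : Odd L)
    (hH : 2 < H) (hdvd : H ∣ L - 1)
    (α : ZMod L) (hα : IsPrimitiveRoot α (L - 1))
    (logα : ZMod L → ℕ) (hlog0 : logα 0 = 0)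
    (hlog : ∀ x : ZMod L, x ≠ 0 → logα x < L - 1 ∧ α ^ logα x = x) :
    let φ : ℕ → Fin L → Fin L → ℂ := fun lam c k =>
      (1 / Real.sqrt L) *
        Complex.exp (2 * (Real.pi : ℂ) * Complex.I * (lam : ℂ) *
          ((logα ((k.val : ℕ) : ZMod L) : ℕ) : ℂ) / (H : ℂ)) *
        Complex.exp (-(2 * (Real.pi : ℂ) * Complex.I * (k.val : ℂ) * (c.val : ℂ)) / (L : ℂ))
    ∀ lam lam' : ℕ, ∀ c c' : Fin L,
      1 ≤ lam → lam ≤ H - 1 → 1 ≤ lam' → lam' ≤ H - 1 →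
      (lam, c) ≠ (lam', c') →
      ‖cinner (φ lam c) (φ lam' c')‖ ≤ (Real.sqrt L + 1) / L := by
  intro φ lam lam' c c' hl1 hl2 hl1' hl2' hne
  have hφ : φ = fun (lam : ℕ) (c k : Fin L) =>
      (1 / Real.sqrt L) *
        Complex.exp (2 * (Real.pi : ℂ) * Complex.I * (lam : ℂ) *
          ((logα ((k.val : ℕ) : ZMod L) : ℕ) : ℂ) / (H : ℂ)) *
        Complex.exp (-(2 * (Real.pi : ℂ) * Complex.I * (k.val : ℂ) * (c.val : ℂ)) / (L : ℂ)) := rfl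
  haveI : Fact (Nat.Prime L) := ⟨hp⟩
  haveI : NeZero L := ⟨hp.pos.ne'⟩
  have hL1 : 1 < L := hp.one_lt
  have hLR : (0:ℝ) < L := by exact_mod_cast hp.pos
  have hsqrt : (0:ℝ) ≤ Real.sqrt L := Real.sqrt_nonneg _
  have hHC : (H:ℂ) ≠ 0 := Nat.cast_ne_zero.mpr (by omega)
  have hLC : (L:ℂ) ≠ 0 := Nat.cast_ne_zero.mpr (by omega)
  set μ : ℤ := (lam' : ℤ) - lam with hμdef
  set D : ℤ := (c.val : ℤ) - (c'.val : ℤ) with hDdef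
  set ψ := ZMod.stdAddChar (N := L) with hψdef
  set d : ZMod L := (D : ZMod L) with hddef
  set M : ZMod L → ℂ := fun x =>
    Complex.exp (2*(Real.pi:ℂ)*I*(μ:ℂ)*((logα x : ℕ):ℂ)/(H:ℂ)) with hM
  -- pointwise identity
  have hpt : ∀ k : Fin L, conj (φ lam c k) * φ lam' c' k
      = (L:ℂ)⁻¹ * (M ((k.val : ℕ) : ZMod L) * ψ (((k.val : ℕ) : ZMod L) * d)) := by
    intro k
    have hψk : ψ (((k.val : ℕ) : ZMod L) * d)
        = Complex.exp (2*(Real.pi:ℂ)*I*(((k.val : ℤ) * D : ℤ):ℂ)/(L:ℂ)) := by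
      rw [hψdef, show ((((k.val : ℕ)) : ZMod L) * d) = ((((k.val:ℤ) * D : ℤ)) : ZMod L) by
        rw [hddef]; push_cast; ring]
      exact ZMod.stdAddChar_coe _
    rw [hφ, hψk, hM]
    simp only []
    rw [map_mul, map_mul, ← Complex.exp_conj, ← Complex.exp_conj]
    have hscal : conj ((1 : ℂ) / (Real.sqrt L : ℂ)) * ((1:ℂ) / (Real.sqrt L : ℂ)) = (L:ℂ)⁻¹ := by
      rw [map_div₀, map_one, Complex.conj_ofReal]
      rw [div_mul_div_comm, one_mul, ← Complex.ofReal_mul, Real.mul_self_sqrt hLR.le]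
      rw [one_div, Complex.ofReal_natCast]
    calc conj ((1:ℂ) / (Real.sqrt L : ℂ)) *
        Complex.exp (conj (2 * (Real.pi : ℂ) * Complex.I * (lam : ℂ) *
          ((logα ((k.val : ℕ) : ZMod L) : ℕ) : ℂ) / (H : ℂ))) *
        Complex.exp (conj (-(2 * (Real.pi : ℂ) * Complex.I * (k.val : ℂ) * (c.val : ℂ)) / (L : ℂ)))
      * ((1 / Real.sqrt L) *
        Complex.exp (2 * (Real.pi : ℂ) * Complex.I * (lam' : ℂ) *
          ((logα ((k.val : ℕ) : ZMod L) : ℕ) : ℂ) / (H : ℂ)) *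
        Complex.exp (-(2 * (Real.pi : ℂ) * Complex.I * (k.val : ℂ) * (c'.val : ℂ)) / (L : ℂ)))
        = (conj ((1:ℂ) / (Real.sqrt L : ℂ)) * ((1:ℂ) / (Real.sqrt L : ℂ))) *
          Complex.exp (conj (2 * (Real.pi : ℂ) * Complex.I * (lam : ℂ) *
              ((logα ((k.val : ℕ) : ZMod L) : ℕ) : ℂ) / (H : ℂ))
            + conj (-(2 * (Real.pi : ℂ) * Complex.I * (k.val : ℂ) * (c.val : ℂ)) / (L : ℂ))
            + 2 * (Real.pi : ℂ) * Complex.I * (lam' : ℂ) *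
              ((logα ((k.val : ℕ) : ZMod L) : ℕ) : ℂ) / (H : ℂ)
            + -(2 * (Real.pi : ℂ) * Complex.I * (k.val : ℂ) * (c'.val : ℂ)) / (L : ℂ)) := by
          rw [Complex.exp_add, Complex.exp_add, Complex.exp_add]; ring
    _ = (L:ℂ)⁻¹ * Complex.exp ((2*(Real.pi:ℂ)*I*(μ:ℂ)*((logα ((k.val : ℕ) : ZMod L) : ℕ):ℂ)/(H:ℂ))
            + (2*(Real.pi:ℂ)*I*(((k.val : ℤ) * D : ℤ):ℂ)/(L:ℂ))) := by
          rw [hscal]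
          congr 1
          simp only [map_div₀, map_mul, map_ofNat, map_neg, Complex.conj_I,
            Complex.conj_natCast, Complex.conj_ofReal]
          rw [hμdef, hDdef]
          push_cast
          ring
    _ = (L:ℂ)⁻¹ * (Complex.exp (2*(Real.pi:ℂ)*I*(μ:ℂ)*((logα ((k.val : ℕ) : ZMod L) : ℕ):ℂ)/(H:ℂ))
          * Complex.exp (2*(Real.pi:ℂ)*I*(((k.val : ℤ) * D : ℤ):ℂ)/(L:ℂ))) := by
          rw [Complex.exp_add]
  -- sum identity
  have hbij : Function.Bijective (fun k : Fin L => ((k.val : ℕ) : ZMod L)) := by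
    rw [Fintype.bijective_iff_injective_and_card]
    refine ⟨fun a b hab => ?_, by rw [ZMod.card, Fintype.card_fin]⟩
    have h1 := congrArg ZMod.val hab
    rwa [ZMod.val_cast_of_lt a.isLt, ZMod.val_cast_of_lt b.isLt, ← Fin.ext_iff] at h1
  have hsum : cinner (φ lam c) (φ lam' c') = (L:ℂ)⁻¹ * ∑ x : ZMod L, M x * ψ (x * d) := by
    rw [cinner, Finset.mul_sum]
    exact Fintype.sum_bijective _ hbij _ _ hpt
  have hprim : ψ.IsPrimitive := by rw [hψdef]; exact ZMod.isPrimitive_stdAddChar L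
  by_cases hll : lam = lam'
  · -- trivial multiplicative part
    have hcc : c ≠ c' := by
      intro h; exact hne (by rw [hll, h])
    have hdne : d ≠ 0 := by
      intro h0
      rw [hddef, ZMod.intCast_zmod_eq_zero_iff_dvd] at h0
      have hD0 : D = 0 := Int.eq_zero_of_abs_lt_dvd h0 (by
        have h1 : c.val < L := c.isLt
        have h2 : c'.val < L := c'.isLt
        rw [hDdef, abs_lt]
        constructor <;> omega)
      rw [hDdef, sub_eq_zero] at hD0
      exact hcc (Fin.ext (by exact_mod_cast hD0))
    have hM1 : ∀ x : ZMod L, M x = 1 := by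
      intro x
      rw [hM]
      have : (μ : ℂ) = 0 := by rw [hμdef, hll]; push_cast; ring
      simp [this]
    have hzero : ∑ x : ZMod L, M x * ψ (x * d) = 0 := by
      simp only [hM1, one_mul]
      rw [AddChar.sum_mulShift d hprim]
      simp [hdne]
    rw [hsum, hzero, mul_zero, norm_zero]
    positivity
  · -- nontrivial character
    have hμ0 : μ ≠ 0 := by
      simp only [hμdef, sub_ne_zero]
      intro h
      have h2 : lam' = lam := by exact_mod_cast h
      exact hll h2.symm
    have hμH : μ.natAbs < H := by rw [hμdef]; omega
    obtain ⟨χ, hχval, hχ1, hχconj⟩ :=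
      prmib_exists_mulChar L H hH hdvd α hα logα hlog μ hμ0 hμH
    have hsplit : ∀ x : ZMod L,
        M x * ψ (x * d) = (if x = 0 then 1 else 0) + χ x * (AddChar.mulShift ψ d) x := by
      intro x
      rw [AddChar.mulShift_apply]
      by_cases hx : x = 0
      · subst hx
        rw [if_pos rfl, MulChar.map_nonunit χ not_isUnit_zero, hM]
        simp [hlog0]
      · rw [if_neg hx, hχval x hx, zero_add, hM, mul_comm d x]
    have hsum2 : ∑ x : ZMod L, M x * ψ (x * d)
        = 1 + gaussSum χ (AddChar.mulShift ψ d) := by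
      have h1 : (∑ x : ZMod L, (if x = 0 then (1:ℂ) else 0)) = 1 := by simp
      rw [Finset.sum_congr rfl (fun x _ => hsplit x), Finset.sum_add_distrib, h1]
      rfl
    by_cases hd0 : d = 0
    · have hgs0 : gaussSum χ (AddChar.mulShift ψ d) = 0 := by
        rw [gaussSum]
        have : ∀ x : ZMod L, AddChar.mulShift ψ d x = 1 := by
          intro x; rw [AddChar.mulShift_apply, hd0, zero_mul, AddChar.map_zero_eq_one]
        simp only [this, mul_one]
        exact χ.sum_eq_zero_of_ne_one hχ1
      rw [hsum, hsum2, hgs0, add_zero, mul_one, norm_inv, Complex.norm_natCast,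
        inv_eq_one_div]
      rw [div_le_div_iff_of_pos_right hLR]
      linarith
    · set u : (ZMod L)ˣ := Units.mk0 d hd0 with hu
      have hgs := gaussSum_mulShift χ ψ u
      have habsχ : ‖χ d‖ = 1 := by
        rw [hχval d hd0]
        rw [show 2*(Real.pi:ℂ)*I*(μ:ℂ)*((logα d : ℕ):ℂ)/(H:ℂ)
            = ((2*Real.pi*μ*(logα d)/H : ℝ) : ℂ) * I by push_cast; ring]
        exact Complex.norm_exp_ofReal_mul_I _
      have habsG : ‖gaussSum χ (AddChar.mulShift ψ d)‖ = Real.sqrt L := by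
        have h2 := congrArg (fun z : ℂ => ‖z‖) hgs
        rw [norm_mul] at h2
        rw [hψdef] at h2
        rw [prmib_abs_gaussSum_eq L χ hχ1 hχconj] at h2
        have hud : (u : ZMod L) = d := rfl
        rw [hud] at h2
        rw [← hψdef] at h2
        rwa [habsχ, one_mul] at h2
      rw [hsum, hsum2, norm_mul, norm_inv, Complex.norm_natCast]
      have htri : ‖1 + gaussSum χ (AddChar.mulShift ψ d)‖
          ≤ 1 + Real.sqrt L := by
        calc ‖1 + gaussSum χ (AddChar.mulShift ψ d)‖
            ≤ ‖(1:ℂ)‖ + ‖gaussSum χ (AddChar.mulShift ψ d)‖ :=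
              norm_add_le _ _
        _ = 1 + Real.sqrt L := by rw [norm_one, habsG]
      calc (L:ℝ)⁻¹ * ‖1 + gaussSum χ (AddChar.mulShift ψ d)‖
          ≤ (L:ℝ)⁻¹ * (1 + Real.sqrt L) := by
            apply mul_le_mul_of_nonneg_left htri
            positivity
      _ = (Real.sqrt L + 1) / L := by field_simp; ring


end
end

section
/- Let p be a prime, m ≥ 1, q = p^m, L = q − 1, let F_q be a finite field with q elements, let α be a generator of the multiplicative group F_q^×, and let H ≥ 2 be an integer dividing L. Define log_α : F_q → ℤ by log_α(α^t) = t for 0 ≤ t ≤ L−1 and log_α(0) = 0. For λ ∈ {1, …, H−1} and c ∈ {0, …, L−1} define φ_{λ,c} ∈ ℂ^L by φ_{λ,c}(k) = (1/√L) · e^{2πi λ log_α(1 + α^k)/H} · e^{−2πi kc/L} for k ∈ {0, …, L−1}. Then for all pairs (λ,c) ≠ (λ',c'), |⟨φ_{λ,c}, φ_{λ',c'}⟩| ≤ (√(L+1) + 3)/L. -/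
open ComplexConjugate

noncomputable section

open Finset in
private lemma sidel_aux_jacobi (F : Type) [Field F] [Fintype F] (χ ψ : MulChar F ℂ)
    (hχc : ∀ x, conj (χ x) = χ⁻¹ x) (hψc : ∀ x, conj (ψ x) = ψ⁻¹ x)
    (hψ1 : ψ ≠ 1) :
    ‖(jacobiSum χ ψ)‖ ≤ Real.sqrt (Fintype.card F) := by
  have hchar : ringChar ℂ ≠ ringChar F := by
    simpa only [ringChar.eq_zero] using (CharP.ringChar_ne_zero_of_finite F).symm
  have h1 : (1:ℝ) ≤ Real.sqrt (Fintype.card F) := by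
    rw [show (1:ℝ) = Real.sqrt 1 from Real.sqrt_one.symm]
    apply Real.sqrt_le_sqrt
    exact_mod_cast Fintype.card_pos
  have habs1 : ∀ (θ : MulChar F ℂ), (∀ x, conj (θ x) = θ⁻¹ x) →
      ‖(θ (-1))‖ = 1 := by
    intro θ hc
    have hu : IsUnit (-1 : F) := IsUnit.neg isUnit_one
    have h2 : θ (-1) * conj (θ (-1)) = 1 := by
      rw [hc, ← MulChar.mul_apply, mul_inv_cancel]
      have := MulChar.one_apply_coe (R := F) (R' := ℂ) hu.unit
      rwa [hu.unit_spec] at this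
    have h3 : Complex.normSq (θ (-1)) = 1 := by
      have := h2
      rw [Complex.mul_conj] at this
      exact_mod_cast this
    rw [Complex.norm_def, h3, Real.sqrt_one]
  by_cases hχ1 : χ = 1
  · rw [hχ1, jacobiSum_one_nontrivial hψ1]
    simpa using h1
  by_cases hmul : χ * ψ = 1
  · have hψeq : ψ = χ⁻¹ := eq_inv_of_mul_eq_one_left (by rwa [mul_comm])
    rw [hψeq, jacobiSum_nontrivial_inv hχ1, norm_neg]
    rw [habs1 χ hχc]
    exact h1
  · have key := jacobiSum_mul_jacobiSum_inv hchar hχ1 hψ1 hmul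
    have hconj : conj (jacobiSum χ ψ) = jacobiSum χ⁻¹ ψ⁻¹ := by
      simp only [jacobiSum, map_sum, map_mul, hχc, hψc]
    rw [← hconj] at key
    have habs : (‖(jacobiSum χ ψ)‖)^2 = (Fintype.card F : ℝ) := by
      rw [Complex.sq_norm]
      rw [Complex.mul_conj] at key
      exact_mod_cast key
    have heq : ‖(jacobiSum χ ψ)‖ = Real.sqrt (Fintype.card F) := by
      rw [← habs, Real.sqrt_sq (norm_nonneg _)]
    exact heq.le

open Finset in
private lemma sidel_aux_char (F : Type) [Field F] [Fintype F] (L : ℕ) (α : F) (logα : F → ℕ)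
    (hL0 : 0 < L)
    (hlog_mul : ∀ x y : F, x ≠ 0 → y ≠ 0 → logα (x * y) = (logα x + logα y) % L) :
    ∃ χ : ℤ → MulChar F ℂ,
      (∀ (a : ℤ) (x : F), x ≠ 0 →
        χ a x = Complex.exp (2 * Real.pi * Complex.I / L) ^ (a * (logα x : ℤ))) := by
  set ω : ℂ := Complex.exp (2 * Real.pi * Complex.I / L) with hωdef
  have hω0 : ω ≠ 0 := Complex.exp_ne_zero _
  have hprim : IsPrimitiveRoot ω L := Complex.isPrimitiveRoot_exp L hL0.ne'
  have hωL : ω ^ (L : ℤ) = 1 := by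
    rw [zpow_natCast]; exact hprim.pow_eq_one
  have hper : ∀ u v : ℤ, (L : ℤ) ∣ u - v → ω ^ u = ω ^ v := by
    rintro u v ⟨k, hk⟩
    have : u = v + (L : ℤ) * k := by linarith
    rw [this, zpow_add₀ hω0, zpow_mul, hωL, one_zpow, mul_one]
  have hmm : ∀ a : ℤ, ∀ u v : Fˣ,
      (fun u : Fˣ => Units.mk0 (ω ^ (a * (logα (u : F) : ℤ))) (zpow_ne_zero _ hω0)) (u * v)
      = (fun u : Fˣ => Units.mk0 (ω ^ (a * (logα (u : F) : ℤ))) (zpow_ne_zero _ hω0)) u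
        * (fun u : Fˣ => Units.mk0 (ω ^ (a * (logα (u : F) : ℤ))) (zpow_ne_zero _ hω0)) v := by
    intro a u v
    ext
    push_cast [Units.val_mk0]
    rw [← zpow_add₀ hω0, ← mul_add]
    apply hper
    have h1 : Nat.ModEq L (logα (u : F) + logα (v : F)) (logα ((u : F) * v)) := by
      show _ % L = _ % L
      rw [hlog_mul _ _ u.ne_zero v.ne_zero, Nat.mod_mod_of_dvd _ dvd_rfl]
    have h2 : (L : ℤ) ∣ ((logα ((u : F) * v) : ℤ) - ((logα (u : F) : ℤ) + (logα (v : F) : ℤ))) := by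
      exact_mod_cast h1.dvd
    have h3 := Dvd.dvd.mul_left h2 a
    rw [mul_sub] at h3
    exact h3
  refine ⟨fun a => MulChar.ofUnitHom (MonoidHom.mk' (fun u : Fˣ => Units.mk0 (ω ^ (a * (logα (u : F) : ℤ))) (zpow_ne_zero _ hω0)) (hmm a)), ?_⟩
  intro a x hx
  have h := MulChar.ofUnitHom_coe (MonoidHom.mk' (fun u : Fˣ => Units.mk0 (ω ^ (a * (logα (u : F) : ℤ))) (zpow_ne_zero _ hω0)) (hmm a)) (Units.mk0 x hx)
  rw [Units.val_mk0] at h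
  rw [h]
  rfl

open Finset in
/-- for a finite field `F` with `q = p^m` elements, `L = q − 1`, a generator
`α` of `F^×`, `H ≥ 2` dividing `L`, and the discrete logarithm `logα` (with
`logα 0 = 0`), the Sidelnikov masked DFT columns
`φ_{λ,c}(k) = (1/√L) e^{2πi λ logα(1+α^k)/H} e^{−2πi kc/L}`, `λ ∈ {1,…,H−1}`,
satisfy `|⟨φ_{λ,c}, φ_{λ',c'}⟩| ≤ (√(L+1) + 3)/L` for all `(λ,c) ≠ (λ',c')`. -/
theorem sidelnikov_mask_inner_bound (p m : ℕ) (hp : Nat.Prime p) (hm : 1 ≤ m)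
    (F : Type) [Field F] [Fintype F] (hcard : Fintype.card F = p ^ m)
    (L : ℕ) (hL : L = p ^ m - 1)
    (H : ℕ) (hH : 2 ≤ H) (hdvd : H ∣ L)
    (α : F) (hα : ∀ x : F, x ≠ 0 → ∃ t : ℕ, α ^ t = x)
    (logα : F → ℕ) (hlog0 : logα 0 = 0)
    (hlog : ∀ t : ℕ, t < L → logα (α ^ t) = t) :
    let φ : ℕ → Fin L → Fin L → ℂ := fun lam c k =>
      (1 / Real.sqrt L) *
        Complex.exp (2 * (Real.pi : ℂ) * Complex.I * (lam : ℂ) *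
          ((logα (1 + α ^ (k.val : ℕ)) : ℕ) : ℂ) / (H : ℂ)) *
        Complex.exp (-(2 * (Real.pi : ℂ) * Complex.I * (k.val : ℂ) * (c.val : ℂ)) / (L : ℂ))
    ∀ lam lam' : ℕ, ∀ c c' : Fin L,
      1 ≤ lam → lam ≤ H - 1 → 1 ≤ lam' → lam' ≤ H - 1 →
      (lam, c) ≠ (lam', c') →
      ‖cinner (φ lam c) (φ lam' c')‖
        ≤ (Real.sqrt ((L : ℝ) + 1) + 3) / L := by
  intro φ lam lam' c c' hl1 hlH hl1' hlH' hne
  -- basic numerology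
  have hq2 : 2 ≤ p ^ m := by
    calc 2 ≤ p := hp.two_le
    _ = p ^ 1 := (pow_one p).symm
    _ ≤ p ^ m := Nat.pow_le_pow_right hp.pos hm
  have hL1 : 1 ≤ L := by omega
  have hL2 : 2 ≤ L := le_trans hH (Nat.le_of_dvd (by omega) hdvd)
  have hL0 : 0 < L := by omega
  have hcardL : Fintype.card F = L + 1 := by omega
  have hα0 : α ≠ 0 := by
    intro h
    have h1 := hlog 1 (by omega)
    rw [pow_one, h, hlog0] at h1
    exact one_ne_zero h1.symm
  have hαL : α ^ L = 1 := by
    have := FiniteField.pow_card_sub_one_eq_one α hα0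
    rwa [hcardL, Nat.add_sub_cancel] at this
  have hpow_mod : ∀ s : ℕ, α ^ s = α ^ (s % L) := by
    intro s
    conv_lhs => rw [← Nat.div_add_mod s L]
    rw [pow_add, pow_mul, hαL, one_pow, one_mul]
  have hinj : ∀ s t : ℕ, s < L → t < L → α ^ s = α ^ t → s = t := by
    intro s t hs ht hst
    rw [← hlog s hs, ← hlog t ht, hst]
  have hlog_spec : ∀ x : F, x ≠ 0 → logα x < L ∧ α ^ logα x = x := by
    intro x hx
    obtain ⟨t, ht⟩ := hα x hx
    have h2 : α ^ (t % L) = x := by rw [← hpow_mod]; exact ht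
    have h3 : logα x = t % L := by rw [← h2, hlog _ (Nat.mod_lt t hL0)]
    exact ⟨h3 ▸ Nat.mod_lt t hL0, by rw [h3]; exact h2⟩
  have hlog_mul : ∀ x y : F, x ≠ 0 → y ≠ 0 → logα (x * y) = (logα x + logα y) % L := by
    intro x y hx hy
    have hxy : x * y ≠ 0 := mul_ne_zero hx hy
    obtain ⟨hlt, heq⟩ := hlog_spec (x*y) hxy
    obtain ⟨hltx, heqx⟩ := hlog_spec x hx
    obtain ⟨hlty, heqy⟩ := hlog_spec y hy
    apply hinj _ _ hlt (Nat.mod_lt _ hL0)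
    rw [heq, ← hpow_mod, pow_add, heqx, heqy]
  -- the characters
  obtain ⟨χ, hχval⟩ := sidel_aux_char F L α logα hL0 hlog_mul
  set ω : ℂ := Complex.exp (2 * Real.pi * Complex.I / L) with hωdef
  have hω0 : ω ≠ 0 := Complex.exp_ne_zero _
  have hprim : IsPrimitiveRoot ω L := Complex.isPrimitiveRoot_exp L hL0.ne'
  have hχ0 : ∀ a : ℤ, χ a 0 = 0 := fun a => MulChar.map_zero (χ a)
  have hχmulval : ∀ a b : ℤ, ∀ x : F, χ a x * χ b x = χ (a+b) x := by
    intro a b x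
    by_cases hx : x = 0
    · rw [hx, hχ0, zero_mul, hχ0]
    · rw [hχval a x hx, hχval b x hx, hχval (a+b) x hx, ← zpow_add₀ hω0, ← add_mul]
  have hχmul : ∀ a b : ℤ, χ a * χ b = χ (a + b) := by
    intro a b
    apply MulChar.ext
    intro u
    rw [← hχmulval a b u]
    rfl
  have hχzero : χ 0 = 1 := by
    apply MulChar.ext
    intro u
    rw [MulChar.one_apply_coe, hχval 0 u u.ne_zero, zero_mul, zpow_zero]
  have hχinv : ∀ a : ℤ, (χ a)⁻¹ = χ (-a) := by
    intro a
    apply inv_eq_of_mul_eq_one_right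
    rw [hχmul, add_neg_cancel, hχzero]
  have hωconj : conj ω = ω⁻¹ := by
    rw [hωdef, ← Complex.exp_conj, ← Complex.exp_neg]
    congr 1
    simp only [map_div₀, map_mul, Complex.conj_I, Complex.conj_ofReal, map_natCast, map_ofNat]
    ring
  have hχconj : ∀ (a : ℤ) (x : F), conj (χ a x) = (χ a)⁻¹ x := by
    intro a x
    rw [hχinv]
    by_cases hx : x = 0
    · rw [hx, hχ0, hχ0, map_zero]
    · rw [hχval a x hx, hχval (-a) x hx, map_zpow₀, hωconj, inv_zpow, ← zpow_neg, neg_mul]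
  have hχne : ∀ a : ℤ, ¬ (L : ℤ) ∣ a → χ a ≠ 1 := by
    intro a ha h1
    apply ha
    have hlogα : logα α = 1 := by
      have := hlog 1 (by omega); rwa [pow_one] at this
    have h2 : χ a α = 1 := by rw [h1, ← hχzero, hχval 0 α hα0, zero_mul, zpow_zero]
    rw [hχval a α hα0, hlogα] at h2
    rw [← hprim.zpow_eq_one_iff_dvd]
    simpa using h2
  have hχabsval : ∀ (a : ℤ) (x : F), x ≠ 0 → ‖(χ a x)‖ = 1 := by
    intro a x hx
    have h2 : χ a x * conj (χ a x) = 1 := by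
      rw [hχconj, hχinv, hχmulval, add_neg_cancel, hχval 0 x hx, zero_mul, zpow_zero]
    have h3 : Complex.normSq (χ a x) = 1 := by
      rw [Complex.mul_conj] at h2
      exact_mod_cast h2
    rw [Complex.norm_def, h3, Real.sqrt_one]
  classical
  -- exponent integers
  have hH0 : 0 < H := by omega
  have hLHnat : L / H * H = L := Nat.div_mul_cancel hdvd
  have hLH0 : 0 < L / H := Nat.div_pos (Nat.le_of_dvd hL0 hdvd) hH0
  have hLC : (L : ℂ) ≠ 0 := Nat.cast_ne_zero.mpr hL0.ne'
  have hHC : (H : ℂ) ≠ 0 := Nat.cast_ne_zero.mpr hH0.ne'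
  have hLHC : ((L / H : ℕ) : ℂ) = (L : ℂ) / (H : ℂ) := by
    rw [eq_div_iff hHC]
    exact_mod_cast congrArg (Nat.cast : ℕ → ℂ) hLHnat
  set g : F → ℂ := fun x => (if 1 + x = 0 then 1 else χ (((lam' : ℤ) - (lam : ℤ)) * ((L / H : ℕ) : ℤ)) (1 + x)) * χ (((c.val : ℕ) : ℤ) - ((c'.val : ℕ) : ℤ)) x with hgdef
  -- the key summand identity
  have hωpow : ∀ n : ℤ, ω ^ n = Complex.exp ((n : ℂ) * (2 * Real.pi * Complex.I / L)) := by
    intro n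
    rw [Complex.exp_int_mul, hωdef]
  have hsummand : ∀ k : Fin L,
      conj (φ lam c k) * φ lam' c' k = (L : ℂ)⁻¹ * g (α ^ (k : ℕ)) := by
    intro k
    have hx : α ^ (k : ℕ) ≠ 0 := pow_ne_zero _ hα0
    have hlogk : logα (α ^ (k : ℕ)) = (k : ℕ) := hlog k k.isLt
    have hss : (1 / (Real.sqrt L : ℂ)) * (1 / (Real.sqrt L : ℂ)) = (L : ℂ)⁻¹ := by
      rw [div_mul_div_comm, one_mul, ← Complex.ofReal_mul,
        Real.mul_self_sqrt (Nat.cast_nonneg L), Complex.ofReal_natCast, one_div]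
    have hE : χ (((c.val : ℕ) : ℤ) - ((c'.val : ℕ) : ℤ)) (α ^ (k : ℕ)) =
        Complex.exp ((((((c.val : ℕ) : ℤ) - ((c'.val : ℕ) : ℤ)) : ℤ) : ℂ) * (k.val : ℂ) * (2 * Real.pi * Complex.I / L)) := by
      rw [hχval (((c.val : ℕ) : ℤ) - ((c'.val : ℕ) : ℤ)) _ hx, hlogk, hωpow]
      congr 1
      push_cast
      ring
    simp only [φ]
    rw [map_mul, map_mul]
    rw [show conj (1 / (Real.sqrt L : ℂ)) = 1 / (Real.sqrt L : ℂ) by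
      rw [map_div₀, map_one, Complex.conj_ofReal]]
    rw [← Complex.exp_conj, ← Complex.exp_conj]
    rw [show conj (2 * (Real.pi : ℂ) * Complex.I * (lam : ℂ) *
          ((logα (1 + α ^ (k.val : ℕ)) : ℕ) : ℂ) / (H : ℂ))
        = -(2 * (Real.pi : ℂ) * Complex.I * (lam : ℂ) *
          ((logα (1 + α ^ (k.val : ℕ)) : ℕ) : ℂ) / (H : ℂ)) by
      simp only [map_div₀, map_mul, map_ofNat, Complex.conj_I, Complex.conj_ofReal,
        map_natCast]
      ring]
    rw [show conj (-(2 * (Real.pi : ℂ) * Complex.I * (k.val : ℂ) * (c.val : ℂ)) / (L : ℂ))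
        = (2 * (Real.pi : ℂ) * Complex.I * (k.val : ℂ) * (c.val : ℂ)) / (L : ℂ) by
      simp only [map_div₀, map_neg, map_mul, map_ofNat, Complex.conj_I, Complex.conj_ofReal,
        map_natCast]
      ring]
    by_cases h1 : 1 + α ^ (k : ℕ) = 0
    · have ht0 : logα (1 + α ^ (k : ℕ)) = 0 := by rw [h1, hlog0]
      rw [hgdef]
      simp only [if_pos h1, one_mul]
      rw [hE, ht0]
      rw [show (1 / (Real.sqrt L : ℂ) * Complex.exp (-(2 * (Real.pi : ℂ) * Complex.I *
            (lam : ℂ) * ((0 : ℕ) : ℂ) / (H : ℂ))) *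
          Complex.exp (2 * (Real.pi : ℂ) * Complex.I * (k.val : ℂ) * (c.val : ℂ) / (L : ℂ))) *
          (1 / (Real.sqrt L : ℂ) * Complex.exp (2 * (Real.pi : ℂ) * Complex.I * (lam' : ℂ) *
            ((0 : ℕ) : ℂ) / (H : ℂ)) *
          Complex.exp (-(2 * (Real.pi : ℂ) * Complex.I * (k.val : ℂ) * (c'.val : ℂ)) / (L : ℂ)))
          = (1 / (Real.sqrt L : ℂ) * (1 / (Real.sqrt L : ℂ))) *
            Complex.exp ((-(2 * (Real.pi : ℂ) * Complex.I * (lam : ℂ) * ((0 : ℕ) : ℂ) / (H : ℂ)))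
              + (2 * (Real.pi : ℂ) * Complex.I * (k.val : ℂ) * (c.val : ℂ) / (L : ℂ))
              + ((2 * (Real.pi : ℂ) * Complex.I * (lam' : ℂ) * ((0 : ℕ) : ℂ) / (H : ℂ))
              + (-(2 * (Real.pi : ℂ) * Complex.I * (k.val : ℂ) * (c'.val : ℂ)) / (L : ℂ)))) from by
        rw [Complex.exp_add, Complex.exp_add, Complex.exp_add]; ring]
      rw [hss]
      congr 1
      push_cast
      congr 1
      field_simp
      ring
    · have ht : χ (((lam' : ℤ) - (lam : ℤ)) * ((L / H : ℕ) : ℤ)) (1 + α ^ (k : ℕ)) =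
          Complex.exp ((((((lam' : ℤ) - (lam : ℤ)) * ((L / H : ℕ) : ℤ)) : ℤ) : ℂ) * ((logα (1 + α ^ (k : ℕ)) : ℕ) : ℂ)
            * (2 * Real.pi * Complex.I / L)) := by
        rw [hχval (((lam' : ℤ) - (lam : ℤ)) * ((L / H : ℕ) : ℤ)) _ h1, hωpow]
        congr 1
        push_cast
        ring
      rw [hgdef]
      simp only [if_neg h1]
      rw [hE, ht]
      rw [show (1 / (Real.sqrt L : ℂ) * Complex.exp (-(2 * (Real.pi : ℂ) * Complex.I *
            (lam : ℂ) * ((logα (1 + α ^ (k.val : ℕ)) : ℕ) : ℂ) / (H : ℂ))) *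
          Complex.exp (2 * (Real.pi : ℂ) * Complex.I * (k.val : ℂ) * (c.val : ℂ) / (L : ℂ))) *
          (1 / (Real.sqrt L : ℂ) * Complex.exp (2 * (Real.pi : ℂ) * Complex.I * (lam' : ℂ) *
            ((logα (1 + α ^ (k.val : ℕ)) : ℕ) : ℂ) / (H : ℂ)) *
          Complex.exp (-(2 * (Real.pi : ℂ) * Complex.I * (k.val : ℂ) * (c'.val : ℂ)) / (L : ℂ)))
          = (1 / (Real.sqrt L : ℂ) * (1 / (Real.sqrt L : ℂ))) *
            Complex.exp ((-(2 * (Real.pi : ℂ) * Complex.I * (lam : ℂ) *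
                ((logα (1 + α ^ (k.val : ℕ)) : ℕ) : ℂ) / (H : ℂ)))
              + (2 * (Real.pi : ℂ) * Complex.I * (k.val : ℂ) * (c.val : ℂ) / (L : ℂ))
              + ((2 * (Real.pi : ℂ) * Complex.I * (lam' : ℂ) *
                ((logα (1 + α ^ (k.val : ℕ)) : ℕ) : ℂ) / (H : ℂ))
              + (-(2 * (Real.pi : ℂ) * Complex.I * (k.val : ℂ) * (c'.val : ℂ)) / (L : ℂ)))) from by
        rw [Complex.exp_add, Complex.exp_add, Complex.exp_add]; ring]
      rw [hss, ← Complex.exp_add]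
      congr 1
      congr 1
      rw [Int.cast_mul, show (((L / H : ℕ) : ℤ) : ℂ) = (L : ℂ) / (H : ℂ) by rw [Int.cast_natCast, hLHC]]
      push_cast
      field_simp
      ring
  -- reindex the sum over Fin L as a sum over F
  have hg0 : g 0 = 0 := by
    rw [hgdef]
    simp only
    rw [hχ0, mul_zero]
  have hbij : ∑ k : Fin L, g (α ^ (k : ℕ)) = ∑ x : F, g x := by
    rw [← Finset.sum_erase Finset.univ hg0]
    refine Finset.sum_bij' (fun (k : Fin L) _ => α ^ (k : ℕ))
      (fun x hx => ⟨logα x, (hlog_spec x (Finset.ne_of_mem_erase hx)).1⟩)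
      ?_ ?_ ?_ ?_ ?_
    · intro k _
      exact Finset.mem_erase.mpr ⟨pow_ne_zero _ hα0, Finset.mem_univ _⟩
    · intro x hx
      exact Finset.mem_univ _
    · intro k _
      apply Fin.ext
      exact hlog k k.isLt
    · intro x hx
      exact (hlog_spec x (Finset.ne_of_mem_erase hx)).2
    · intro k _
      rfl
  have hcin : cinner (φ lam c) (φ lam' c') = (L : ℂ)⁻¹ * ∑ x : F, g x := by
    unfold cinner
    rw [Finset.sum_congr rfl (fun k _ => hsummand k), ← Finset.mul_sum, hbij]
  have hRpos : (0:ℝ) < L := by exact_mod_cast hL0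
  by_cases hll : lam = lam'
  -- Case 1 : same mask, different DFT column
  · have hcc : c ≠ c' := fun h => hne (by rw [hll, h])
    have hE0 : ((((c.val : ℕ) : ℤ) - ((c'.val : ℕ) : ℤ)) : ℤ) ≠ 0 := by
      intro h
      apply hcc
      apply Fin.ext
      omega
    have hEne : ¬ ((L : ℤ) ∣ (((c.val : ℕ) : ℤ) - ((c'.val : ℕ) : ℤ))) := by
      intro hd
      have h1 := Int.le_of_dvd (abs_pos.mpr hE0) ((dvd_abs _ _).mpr hd)
      have h2 : (c.val : ℤ) < L := by exact_mod_cast c.isLt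
      have h3 : (c'.val : ℤ) < L := by exact_mod_cast c'.isLt
      have h4 : |((((c.val : ℕ) : ℤ) - ((c'.val : ℕ) : ℤ)) : ℤ)| < L := by
        rw [abs_lt]
        omega
      omega
    have hsum0 : ∑ x : F, g x = 0 := by
      have hgE : ∀ x : F, g x = χ (((c.val : ℕ) : ℤ) - ((c'.val : ℕ) : ℤ)) x := by
        intro x
        rw [hgdef]
        simp only
        by_cases hx1 : 1 + x = 0
        · rw [if_pos hx1, one_mul]
        · rw [if_neg hx1]
          have hD0 : ((((lam' : ℤ) - (lam : ℤ)) * ((L / H : ℕ) : ℤ)) : ℤ) = 0 := by rw [hll, sub_self, zero_mul]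
          rw [hD0, hχzero]
          have h5 := MulChar.one_apply_coe (R := F) (R' := ℂ) (Units.mk0 (1+x) hx1)
          rw [Units.val_mk0] at h5
          rw [h5, one_mul]
      rw [Finset.sum_congr rfl (fun x _ => hgE x)]
      exact MulChar.sum_eq_zero_of_ne_one (hχne _ hEne)
    rw [hcin, hsum0, mul_zero, norm_zero]
    positivity
  -- Case 2 : different masks
  · have hd0 : ((lam' : ℤ) - (lam : ℤ)) ≠ 0 := by
      intro h
      apply hll
      omega
    have hDnd : ¬ ((L : ℤ) ∣ (((lam' : ℤ) - (lam : ℤ)) * ((L / H : ℕ) : ℤ))) := by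
      rintro ⟨t, ht⟩
      have hLH' : (L : ℤ) = ((L / H : ℕ) : ℤ) * (H : ℤ) := by exact_mod_cast hLHnat.symm
      have hLHne : ((L / H : ℕ) : ℤ) ≠ 0 := by
        have : (0:ℤ) < ((L / H : ℕ) : ℤ) := by exact_mod_cast hLH0
        omega
      have ht' : ((L / H : ℕ) : ℤ) * ((lam' : ℤ) - (lam : ℤ))
          = ((L / H : ℕ) : ℤ) * ((H : ℤ) * t) := by
        rw [← mul_assoc, ← hLH']
        rw [mul_comm (((L / H : ℕ) : ℤ)) _]
        exact ht
      have ht2 : ((lam' : ℤ) - (lam : ℤ)) = (H : ℤ) * t := mul_left_cancel₀ hLHne ht'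
      have ht3 : t ≠ 0 := by
        intro h
        rw [h, mul_zero] at ht2
        exact hd0 ht2
      have ht4 : (H : ℤ) ≤ |(lam' : ℤ) - (lam : ℤ)| := by
        rw [ht2, abs_mul]
        have h5 : |(H : ℤ)| = (H : ℤ) := abs_of_nonneg (by positivity)
        have h6 : (1:ℤ) ≤ |t| := Int.one_le_abs ht3
        calc (H : ℤ) = (H : ℤ) * 1 := (mul_one _).symm
          _ ≤ |(H : ℤ)| * |t| := by
              rw [h5]
              exact mul_le_mul_of_nonneg_left h6 (by positivity)
      have h7 : |(lam' : ℤ) - (lam : ℤ)| < (H : ℤ) := by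
        rw [abs_lt]
        omega
      omega
    have hχDne : χ (((lam' : ℤ) - (lam : ℤ)) * ((L / H : ℕ) : ℤ)) ≠ 1 := hχne _ hDnd
    have hm1 : (-1 : F) ≠ 0 := neg_ne_zero.mpr one_ne_zero
    -- decompose the sum
    have h1 : ∑ x : F, g x = (∑ x ∈ Finset.univ.erase (-1 : F), g x) + g (-1) :=
      (Finset.sum_erase_add _ _ (Finset.mem_univ _)).symm
    have h2 : ∀ x ∈ Finset.univ.erase (-1 : F), g x = χ (((lam' : ℤ) - (lam : ℤ)) * ((L / H : ℕ) : ℤ)) (1 + x) * χ (((c.val : ℕ) : ℤ) - ((c'.val : ℕ) : ℤ)) x := by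
      intro x hx
      rw [hgdef]
      simp only
      rw [if_neg (fun h => (Finset.ne_of_mem_erase hx) (eq_neg_of_add_eq_zero_right h))]
    have h3 : ∑ x ∈ Finset.univ.erase (-1 : F), χ (((lam' : ℤ) - (lam : ℤ)) * ((L / H : ℕ) : ℤ)) (1 + x) * χ (((c.val : ℕ) : ℤ) - ((c'.val : ℕ) : ℤ)) x
        = ∑ x : F, χ (((lam' : ℤ) - (lam : ℤ)) * ((L / H : ℕ) : ℤ)) (1 + x) * χ (((c.val : ℕ) : ℤ) - ((c'.val : ℕ) : ℤ)) x := by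
      apply Finset.sum_erase
      rw [add_neg_cancel, hχ0, zero_mul]
    have h4 : ∑ x : F, χ (((lam' : ℤ) - (lam : ℤ)) * ((L / H : ℕ) : ℤ)) (1 + x) * χ (((c.val : ℕ) : ℤ) - ((c'.val : ℕ) : ℤ)) x
        = χ (((c.val : ℕ) : ℤ) - ((c'.val : ℕ) : ℤ)) (-1) * jacobiSum (χ (((c.val : ℕ) : ℤ) - ((c'.val : ℕ) : ℤ))) (χ (((lam' : ℤ) - (lam : ℤ)) * ((L / H : ℕ) : ℤ))) := by
      rw [jacobiSum, Finset.mul_sum]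
      calc ∑ x : F, χ (((lam' : ℤ) - (lam : ℤ)) * ((L / H : ℕ) : ℤ)) (1 + x) * χ (((c.val : ℕ) : ℤ) - ((c'.val : ℕ) : ℤ)) x
          = ∑ x : F, χ (((c.val : ℕ) : ℤ) - ((c'.val : ℕ) : ℤ)) (-1) * (χ (((c.val : ℕ) : ℤ) - ((c'.val : ℕ) : ℤ)) (-x) * χ (((lam' : ℤ) - (lam : ℤ)) * ((L / H : ℕ) : ℤ)) (1 + x)) := by
            refine Finset.sum_congr rfl fun x _ => ?_
            rw [← mul_assoc, ← map_mul (χ (((c.val : ℕ) : ℤ) - ((c'.val : ℕ) : ℤ))), neg_mul_neg, one_mul]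
            ring
        _ = ∑ y : F, χ (((c.val : ℕ) : ℤ) - ((c'.val : ℕ) : ℤ)) (-1) * (χ (((c.val : ℕ) : ℤ) - ((c'.val : ℕ) : ℤ)) y * χ (((lam' : ℤ) - (lam : ℤ)) * ((L / H : ℕ) : ℤ)) (1 - y)) := by
            refine (Fintype.sum_equiv (Equiv.neg F) _ _ fun y => ?_).symm
            simp [sub_eq_add_neg]
        _ = _ := rfl
    have hgm1 : g (-1) = χ (((c.val : ℕ) : ℤ) - ((c'.val : ℕ) : ℤ)) (-1) := by
      rw [hgdef]
      simp only
      rw [if_pos (add_neg_cancel 1), one_mul]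
    -- bound
    have hJ : ‖(jacobiSum (χ (((c.val : ℕ) : ℤ) - ((c'.val : ℕ) : ℤ))) (χ (((lam' : ℤ) - (lam : ℤ)) * ((L / H : ℕ) : ℤ))))‖ ≤ Real.sqrt ((L:ℝ) + 1) := by
      have := sidel_aux_jacobi F (χ (((c.val : ℕ) : ℤ) - ((c'.val : ℕ) : ℤ))) (χ (((lam' : ℤ) - (lam : ℤ)) * ((L / H : ℕ) : ℤ))) (hχconj _) (hχconj _) hχDne
      rwa [hcardL, show (((L + 1 : ℕ)):ℝ) = (L:ℝ) + 1 by push_cast; ring] at this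
    have habsE : ‖(χ (((c.val : ℕ) : ℤ) - ((c'.val : ℕ) : ℤ)) (-1))‖ = 1 := hχabsval _ _ hm1
    have hsumb : ‖(∑ x : F, g x)‖ ≤ Real.sqrt ((L:ℝ) + 1) + 1 := by
      rw [h1, Finset.sum_congr rfl h2, h3, h4, hgm1]
      calc ‖(χ (((c.val : ℕ) : ℤ) - ((c'.val : ℕ) : ℤ)) (-1) * jacobiSum (χ (((c.val : ℕ) : ℤ) - ((c'.val : ℕ) : ℤ))) (χ (((lam' : ℤ) - (lam : ℤ)) * ((L / H : ℕ) : ℤ))) + χ (((c.val : ℕ) : ℤ) - ((c'.val : ℕ) : ℤ)) (-1))‖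
          ≤ ‖(χ (((c.val : ℕ) : ℤ) - ((c'.val : ℕ) : ℤ)) (-1) * jacobiSum (χ (((c.val : ℕ) : ℤ) - ((c'.val : ℕ) : ℤ))) (χ (((lam' : ℤ) - (lam : ℤ)) * ((L / H : ℕ) : ℤ))))‖ + ‖(χ (((c.val : ℕ) : ℤ) - ((c'.val : ℕ) : ℤ)) (-1))‖ :=
            norm_add_le _ _
        _ = ‖(jacobiSum (χ (((c.val : ℕ) : ℤ) - ((c'.val : ℕ) : ℤ))) (χ (((lam' : ℤ) - (lam : ℤ)) * ((L / H : ℕ) : ℤ))))‖ + 1 := by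
            rw [norm_mul, habsE, one_mul]
        _ ≤ Real.sqrt ((L:ℝ) + 1) + 1 := by linarith
    rw [hcin, norm_mul, norm_inv, Complex.norm_natCast]
    rw [inv_mul_eq_div]
    refine (div_le_div_iff_of_pos_right hRpos).mpr ?_
    linarith

end
end

section
/- Let p be an odd prime, m ≥ 1, q = p^m, L = q − 1, let F_q be a finite field with q elements, let α be a generator of F_q^×, and let Tr : F_q → F_p be the field trace, with values identified with integers in {0, …, p−1}. For λ ∈ {0, …, L−1} and c ∈ {0, …, L−1} define φ_{λ,c} ∈ ℂ^L by φ_{λ,c}(k) = (1/√L) · e^{2πi Tr(α^{k+λ})/p} · e^{−2πi kc/L} for k ∈ {0, …, L−1}. Then for all pairs (λ,c) ≠ (λ',c'), |⟨φ_{λ,c}, φ_{λ',c'}⟩| ≤ (√(L+1) + 2)/L. -/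
open ComplexConjugate

noncomputable section

private lemma aux_zpow_mod {z : ℂ} (hz : z ≠ 0) {L : ℕ} (hzL : z ^ (L : ℤ) = 1)
    {a b : ℤ} (h : a % (L : ℤ) = b % (L : ℤ)) : z ^ a = z ^ b := by
  have key : ∀ c : ℤ, z ^ c = z ^ (c % (L : ℤ)) := by
    intro c
    conv_lhs => rw [← Int.mul_ediv_add_emod c (L : ℤ)]
    rw [zpow_add₀ hz, zpow_mul, hzL, one_zpow, one_mul]
  rw [key a, key b, h]

private lemma aux_conj_exp (N : ℕ) :
    conj (Complex.exp (2 * (Real.pi : ℂ) * Complex.I / N)) =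
      (Complex.exp (2 * (Real.pi : ℂ) * Complex.I / N))⁻¹ := by
  have h : (2 * (Real.pi : ℂ) * Complex.I / N) = ((2 * Real.pi / N : ℝ) : ℂ) * Complex.I := by
    push_cast; ring
  rw [h]
  have hns : Complex.normSq (Complex.exp (((2 * Real.pi / N : ℝ) : ℂ) * Complex.I)) = 1 := by
    rw [← Complex.sq_norm, Complex.norm_exp_ofReal_mul_I]; norm_num
  rw [Complex.inv_def, hns]
  simp

/-- for an odd prime `p`, a finite field `F` with `q = p^m` elements,
`L = q − 1`, a generator `α` of `F^×`, and the field trace `Tr : F → ZMod p` (values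
identified with integers in `{0,…,p−1}` via `ZMod.val`), the m-sequence masked DFT
columns `φ_{λ,c}(k) = (1/√L) e^{2πi Tr(α^{k+λ})/p} e^{−2πi kc/L}` satisfy
`|⟨φ_{λ,c}, φ_{λ',c'}⟩| ≤ (√(L+1) + 2)/L` for all `(λ,c) ≠ (λ',c')`. -/
theorem trace_mask_inner_bound (p m : ℕ) (hp : Nat.Prime p) (hodd : Odd p) (hm : 1 ≤ m)
    (F : Type) [Field F] [Fintype F] [Algebra (ZMod p) F]
    (hcard : Fintype.card F = p ^ m)
    (L : ℕ) (hL : L = p ^ m - 1)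
    (α : F) (hα : ∀ x : F, x ≠ 0 → ∃ t : ℕ, α ^ t = x) :
    let φ : ℕ → Fin L → Fin L → ℂ := fun lam c k =>
      (1 / Real.sqrt L) *
        Complex.exp (2 * (Real.pi : ℂ) * Complex.I *
          (((Algebra.trace (ZMod p) F (α ^ (k.val + lam : ℕ))).val : ℕ) : ℂ) / (p : ℂ)) *
        Complex.exp (-(2 * (Real.pi : ℂ) * Complex.I * (k.val : ℂ) * (c.val : ℂ)) / (L : ℂ))
    ∀ lam lam' : ℕ, ∀ c c' : Fin L, lam < L → lam' < L →
      (lam, c) ≠ (lam', c') →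
      ‖cinner (φ lam c) (φ lam' c')‖
        ≤ (Real.sqrt ((L : ℝ) + 1) + 2) / L := by
  intro φ lam lam' c c' hlam hlam' hne
  have hφ : ∀ (l : ℕ) (cc k : Fin L), φ l cc k =
      (1 / Real.sqrt L) *
        Complex.exp (2 * (Real.pi : ℂ) * Complex.I *
          (((Algebra.trace (ZMod p) F (α ^ (k.val + l : ℕ))).val : ℕ) : ℂ) / (p : ℂ)) *
        Complex.exp (-(2 * (Real.pi : ℂ) * Complex.I * (k.val : ℂ) * (cc.val : ℂ)) / (L : ℂ)) :=
    fun _ _ _ => rfl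
  haveI : Fact p.Prime := ⟨hp⟩
  haveI : DecidableEq F := Classical.decEq F
  have hp3 : 3 ≤ p := by
    rcases hodd with ⟨t, ht⟩
    have := hp.two_le
    omega
  have hpq : p ≤ p ^ m := Nat.le_self_pow (by omega) p
  have hL2 : 2 ≤ L := by omega
  haveI : NeZero L := ⟨by omega⟩
  have hLpos : (0 : ℝ) < (L : ℝ) := by
    have : 0 < L := by omega
    exact_mod_cast this
  -- the roots of unity
  set ζ : ℂ := Complex.exp (2 * (Real.pi : ℂ) * Complex.I / p) with hζdef
  set ω : ℂ := Complex.exp (2 * (Real.pi : ℂ) * Complex.I / L) with hωdef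
  have hζ : IsPrimitiveRoot ζ p := Complex.isPrimitiveRoot_exp p hp.ne_zero
  have hω : IsPrimitiveRoot ω L := Complex.isPrimitiveRoot_exp L (NeZero.ne L)
  have hζ0 : ζ ≠ 0 := Complex.exp_ne_zero _
  have hω0 : ω ≠ 0 := Complex.exp_ne_zero _
  have hζp : ζ ^ p = 1 := hζ.pow_eq_one
  have hωL : ω ^ L = 1 := hω.pow_eq_one
  have hωLz : ω ^ (L : ℤ) = 1 := by rw [zpow_natCast]; exact hωL
  -- the additive character
  set Tr : F → ZMod p := fun x => Algebra.trace (ZMod p) F x with hTrdef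
  set χ : F → ℂ := fun x => ζ ^ (Tr x).val with hχdef
  have hζmod : ∀ n : ℕ, ζ ^ (n % p) = ζ ^ n := by
    intro n
    conv_rhs => rw [← Nat.div_add_mod n p]
    rw [pow_add, pow_mul, hζp, one_pow, one_mul]
  have χ_add : ∀ x y : F, χ (x + y) = χ x * χ y := by
    intro x y
    have h1 : Tr (x + y) = Tr x + Tr y := by simp [hTrdef, map_add]
    simp only [hχdef, h1, ZMod.val_add, hζmod, pow_add]
  have χ_zero : χ 0 = 1 := by simp [hχdef, hTrdef]
  have χ_conj : ∀ x : F, conj (χ x) = χ (-x) := by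
    intro x
    have h1 : conj (χ x) = (χ x)⁻¹ := by
      simp only [hχdef, map_pow, hζdef, aux_conj_exp p, inv_pow]
    have h2 : χ (-x) * χ x = 1 := by rw [← χ_add]; simp [χ_zero]
    rw [h1]
    exact inv_eq_of_mul_eq_one_left h2
  -- sum of the character over F is zero
  have sum_χ_zero : ∑ x : F, χ x = 0 := by
    obtain ⟨b, hb⟩ : ∃ b : F, Tr b ≠ 0 := by
      haveI : Module.Finite (ZMod p) F := (Module.finite_iff_finite (R := ZMod p)).mpr inferInstance
      have h := Algebra.trace_ne_zero (ZMod p) F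
      by_contra hforall
      push_neg at hforall
      exact h (LinearMap.ext fun b => hforall b)
    have hχb : χ b ≠ 1 := by
      intro h
      apply hb
      have hv := (hζ.pow_eq_one_iff_dvd _).mp h
      have hlt : (Tr b).val < p := ZMod.val_lt (Tr b)
      have h0 : (Tr b).val = 0 := Nat.eq_zero_of_dvd_of_lt hv hlt
      exact (ZMod.val_eq_zero _).mp h0
    have hshift : ∑ x : F, χ (x + b) = ∑ x : F, χ x :=
      Fintype.sum_equiv (Equiv.addRight b) _ _ (fun x => rfl)
    have h2 : (∑ x : F, χ x) * χ b = ∑ x : F, χ x := by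
      calc (∑ x : F, χ x) * χ b = ∑ x : F, χ (x + b) := by
            rw [Finset.sum_mul]
            exact Finset.sum_congr rfl fun x _ => (χ_add x b).symm
        _ = ∑ x : F, χ x := hshift
    have h3 : (∑ x : F, χ x) * (χ b - 1) = 0 := by
      rw [mul_sub, mul_one, h2, sub_self]
    exact (mul_eq_zero.mp h3).resolve_right (sub_ne_zero.mpr hχb)
  -- facts about α
  have two_ne : (2 : F) ≠ 0 := by
    intro h
    have h2 : ((2 : ZMod p)) ≠ 0 := by
      intro hz
      have h4 : ((2 : ℕ) : ZMod p) = 0 := by exact_mod_cast hz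
      have := (ZMod.natCast_eq_zero_iff 2 p).mp h4
      have := Nat.le_of_dvd (by norm_num) this
      omega
    apply h2
    have hinj := (algebraMap (ZMod p) F).injective
    apply hinj
    rw [map_zero]
    rw [show ((2 : ZMod p)) = ((2 : ℕ) : ZMod p) by norm_cast]
    rw [map_natCast]
    exact_mod_cast h
  have hα0 : α ≠ 0 := by
    intro h0
    obtain ⟨t, ht⟩ := hα (-1) (by simp)
    rcases Nat.eq_zero_or_pos t with ht0 | htpos
    · rw [ht0, pow_zero] at ht
      exact two_ne (by linear_combination ht)
    · rw [h0, zero_pow (by omega)] at ht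
      exact one_ne_zero (α := F) (by linear_combination ht)
  set u : Fˣ := Units.mk0 α hα0 with hudef
  have huval : ∀ n : ℕ, ((u ^ n : Fˣ) : F) = α ^ n := by
    intro n; rw [Units.val_pow_eq_pow_val]; rfl
  have hcardu : Fintype.card Fˣ = L := by
    rw [Fintype.card_units, hcard, hL]
  have horder : orderOf u = L := by
    rw [← hcardu, ← Nat.card_eq_fintype_card]
    apply orderOf_eq_card_of_forall_mem_zpowers
    intro x
    obtain ⟨t, ht⟩ := hα x.val (Units.ne_zero x)
    rw [Subgroup.mem_zpowers_iff]
    exact ⟨(t : ℤ), by rw [zpow_natCast]; exact Units.ext (by rw [huval]; exact ht)⟩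
  have hαpow_one : ∀ n : ℕ, α ^ n = 1 ↔ L ∣ n := by
    intro n
    have hiff : α ^ n = 1 ↔ u ^ n = 1 := by
      constructor
      · intro h; exact Units.ext (by rw [huval]; simpa using h)
      · intro h
        have := congrArg Units.val h
        rw [huval] at this
        simpa using this
    rw [hiff, ← horder]
    exact orderOf_dvd_iff_pow_eq_one.symm
  have hαL : α ^ L = 1 := (hαpow_one L).mpr dvd_rfl
  have hαmod : ∀ n : ℕ, α ^ (n % L) = α ^ n := by
    intro n
    conv_rhs => rw [← Nat.div_add_mod n L]
    rw [pow_add, pow_mul, hαL, one_pow, one_mul]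
  have hαinj : ∀ a b : ℕ, a < L → b < L → α ^ a = α ^ b → a = b := by
    have key : ∀ a b : ℕ, a ≤ b → b < L → α ^ a = α ^ b → a = b := by
      intro a b hab hbL h
      have h1 : α ^ a * α ^ (b - a) = α ^ a * 1 := by
        rw [← pow_add, mul_one]
        rw [show a + (b - a) = b by omega]
        exact h.symm
      have h2 : α ^ (b - a) = 1 := mul_left_cancel₀ (pow_ne_zero _ hα0) h1
      have h3 := (hαpow_one _).mp h2
      have := Nat.eq_zero_of_dvd_of_lt h3 (by omega)
      omega
    intro a b ha hb h
    rcases le_total a b with hle | hle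
    exacts [key a b hle hb h, (key b a hle ha h.symm).symm]
  -- sum of χ over nonzero elements
  have sum_units : ∑ v : Fˣ, χ (v : F) = -1 := by
    have h1 : ∑ x ∈ Finset.univ.erase (0 : F), χ x = ∑ v : Fˣ, χ (v : F) := by
      rw [Finset.sum_subtype (p := fun x : F => x ≠ 0) (Finset.univ.erase (0 : F))
        (fun x => by simp) χ]
      exact (Fintype.sum_equiv unitsEquivNeZero _ _ (fun v => by simp)).symm
    have h2 : χ 0 + ∑ x ∈ Finset.univ.erase (0 : F), χ x = ∑ x : F, χ x :=
      Finset.add_sum_erase _ _ (Finset.mem_univ 0)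
    rw [χ_zero, sum_χ_zero] at h2
    rw [← h1]
    linear_combination h2
  have sum_chi_gamma : ∀ γ : F, γ ≠ 0 → ∑ j : Fin L, χ (α ^ (j : ℕ) * γ) = -1 := by
    intro γ hγ
    set w : Fˣ := Units.mk0 γ hγ with hwdef
    have hinj : Function.Injective (fun j : Fin L => u ^ (j : ℕ) * w) := by
      intro a b hab
      simp only at hab
      have h1 : u ^ (a : ℕ) = u ^ (b : ℕ) := mul_right_cancel hab
      have h2 : α ^ (a : ℕ) = α ^ (b : ℕ) := by
        rw [← huval, ← huval, h1]
      exact Fin.ext (hαinj _ _ a.isLt b.isLt h2)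
    have hbij : Function.Bijective (fun j : Fin L => u ^ (j : ℕ) * w) :=
      (Fintype.bijective_iff_injective_and_card _).mpr ⟨hinj, by simp [hcardu]⟩
    calc ∑ j : Fin L, χ (α ^ (j : ℕ) * γ)
        = ∑ v : Fˣ, χ (v : F) := by
          refine Fintype.sum_bijective _ hbij _ _ (fun j => ?_)
          simp only [Units.val_mul, huval, hwdef, Units.val_mk0]
      _ = -1 := sum_units
  -- conj of ω powers
  have hωconj : ∀ e : ℤ, conj (ω ^ e) = ω ^ (-e) := by
    intro e
    rw [map_zpow₀, hωdef, aux_conj_exp L, inv_zpow, ← zpow_neg]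
  -- exponential rewriting
  have exp_chi : ∀ n : ℕ,
      Complex.exp (2 * (Real.pi : ℂ) * Complex.I *
        (((Algebra.trace (ZMod p) F (α ^ n)).val : ℕ) : ℂ) / (p : ℂ)) = χ (α ^ n) := by
    intro n
    rw [show (2 * (Real.pi : ℂ) * Complex.I * (((Algebra.trace (ZMod p) F (α ^ n)).val : ℕ) : ℂ)
        / (p : ℂ)) = (((Algebra.trace (ZMod p) F (α ^ n)).val : ℕ) : ℂ)
        * (2 * (Real.pi : ℂ) * Complex.I / (p : ℂ)) by ring]
    rw [Complex.exp_nat_mul]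
  have exp_om : ∀ a b : ℕ,
      Complex.exp (-(2 * (Real.pi : ℂ) * Complex.I * (a : ℂ) * (b : ℂ)) / (L : ℂ)) =
        ω ^ (-((a * b : ℕ) : ℤ)) := by
    intro a b
    rw [show (-(2 * (Real.pi : ℂ) * Complex.I * (a : ℂ) * (b : ℂ)) / (L : ℂ))
        = ((-((a * b : ℕ) : ℤ) : ℤ) : ℂ) * (2 * (Real.pi : ℂ) * Complex.I / (L : ℂ)) by
        push_cast; ring]
    rw [Complex.exp_int_mul]
  -- fundamental quantities
  set β : F := α ^ lam' - α ^ lam with hβdef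
  set d : ℤ := ((c : ℕ) : ℤ) - ((c' : ℕ) : ℤ) with hddef
  set g : Fin L → ℂ := fun k => χ (α ^ (k : ℕ) * β) * ω ^ (((k : ℕ) : ℤ) * d) with hgdef
  set S : ℂ := ∑ k : Fin L, g k with hSdef
  have hr : (1 / ((Real.sqrt L : ℝ) : ℂ)) * (1 / ((Real.sqrt L : ℝ) : ℂ)) = 1 / (L : ℂ) := by
    rw [div_mul_div_comm, one_mul, ← Complex.ofReal_mul, Real.mul_self_sqrt (le_of_lt hLpos)]
    push_cast
    ring
  -- the key identity
  have key : cinner (φ lam c) (φ lam' c') = 1 / (L : ℂ) * S := by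
    rw [hSdef, Finset.mul_sum]
    unfold cinner
    refine Finset.sum_congr rfl fun k _ => ?_
    rw [hφ, hφ, exp_chi, exp_chi, exp_om, exp_om]
    simp only [map_mul, map_div₀, map_one, Complex.conj_ofReal, χ_conj, hωconj, hgdef]
    have e1 : χ (-(α ^ ((k : ℕ) + lam))) * χ (α ^ ((k : ℕ) + lam')) = χ (α ^ (k : ℕ) * β) := by
      rw [← χ_add]
      congr 1
      rw [hβdef, pow_add, pow_add]
      ring
    have e2 : ω ^ (-(-(((k : ℕ) * (c : ℕ) : ℕ) : ℤ))) * ω ^ (-(((k : ℕ) * (c' : ℕ) : ℕ) : ℤ))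
        = ω ^ (((k : ℕ) : ℤ) * d) := by
      rw [← zpow_add₀ hω0]
      congr 1
      rw [hddef]
      push_cast
      ring
    rw [← e1, ← e2, ← hr]
    ring
  -- reduce to a bound on |S|
  rw [key]
  have habs : ‖1 / (L : ℂ) * S‖ = ‖S‖ / (L : ℝ) := by
    rw [norm_mul, norm_div, norm_one, Complex.norm_natCast]
    ring
  rw [habs, div_le_div_iff₀ hLpos hLpos]
  have hgoal : ∀ h : ‖S‖ ≤ Real.sqrt ((L : ℝ) + 1) + 2,
      ‖S‖ * (L : ℝ) ≤ (Real.sqrt ((L : ℝ) + 1) + 2) * (L : ℝ) := by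
    intro h
    exact mul_le_mul_of_nonneg_right h (le_of_lt hLpos)
  apply hgoal
  -- geometric sum lemma
  have geom : ¬ ((L : ℤ) ∣ d) → ∑ k : Fin L, ω ^ (((k : ℕ) : ℤ) * d) = 0 := by
    intro hnd
    set z : ℂ := ω ^ d with hzdef
    have hz1 : z ≠ 1 := fun h => hnd ((hω.zpow_eq_one_iff_dvd d).mp h)
    have hzL : z ^ L = 1 := by
      rw [hzdef, ← zpow_natCast (ω ^ d) L, ← zpow_mul, mul_comm, zpow_mul, hωLz, one_zpow]
    have hterm : ∀ k : Fin L, ω ^ (((k : ℕ) : ℤ) * d) = z ^ (k : ℕ) := by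
      intro k
      rw [hzdef, ← zpow_natCast (ω ^ d) (k : ℕ), ← zpow_mul, mul_comm]
    rw [Finset.sum_congr rfl (fun k _ => hterm k)]
    rw [Fin.sum_univ_eq_sum_range (fun i => z ^ i) L]
    rw [geom_sum_eq hz1, hzL, sub_self, zero_div]
  -- non-divisibility when c ≠ c'
  have hnd : c ≠ c' → ¬ ((L : ℤ) ∣ d) := by
    intro hcc hdvd
    have h1 : d = 0 := by
      refine Int.eq_zero_of_dvd_of_natAbs_lt_natAbs hdvd ?_
      have hc1 : (c : ℕ) < L := c.isLt
      have hc2 : (c' : ℕ) < L := c'.isLt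
      rw [hddef]
      omega
    apply hcc
    apply Fin.ext
    rw [hddef] at h1
    omega
  -- case analysis
  by_cases hll : lam = lam'
  · -- β = 0, c ≠ c', geometric sum vanishes
    have hcc : c ≠ c' := by
      intro h
      exact hne (by rw [hll, h])
    have hβ0 : β = 0 := by rw [hβdef, hll, sub_self]
    have hS0 : S = 0 := by
      rw [hSdef, ← geom (hnd hcc)]
      refine Finset.sum_congr rfl fun k _ => ?_
      simp only [hgdef, hβ0, mul_zero, χ_zero, one_mul]
    rw [hS0, norm_zero]
    positivity
  · have hβ : β ≠ 0 := by
      rw [hβdef]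
      intro h
      exact hll (hαinj _ _ hlam hlam' (by linear_combination -h))
    by_cases hcc : c = c'
    · -- d = 0, character sum equals -1
      have hd0 : d = 0 := by rw [hddef, hcc, sub_self]
      have hS1 : S = -1 := by
        rw [hSdef, ← sum_chi_gamma β hβ]
        refine Finset.sum_congr rfl fun k _ => ?_
        simp only [hgdef, hd0, mul_zero, zpow_zero, mul_one]
      rw [hS1]
      simp only [norm_neg, norm_one]
      have := Real.sqrt_nonneg ((L : ℝ) + 1)
      linarith
    · -- the main case: |S|² = L + 1
      have hndd := hnd hcc
      have hg_conj : ∀ j : Fin L,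
          conj (g j) = χ (-(α ^ (j : ℕ) * β)) * ω ^ (-(((j : ℕ) : ℤ) * d)) := by
        intro j
        simp only [hgdef, map_mul, χ_conj, hωconj]
      have hshift : ∀ j : Fin L, S = ∑ t : Fin L, g (j + t) := by
        intro j
        rw [hSdef]
        exact (Fintype.sum_equiv (Equiv.addLeft j) (fun t => g (j + t)) g (fun t => rfl)).symm
      have hgg : ∀ j t : Fin L, g (j + t) * conj (g j) =
          χ (α ^ (j : ℕ) * (β * (α ^ (t : ℕ) - 1))) * ω ^ (((t : ℕ) : ℤ) * d) := by
        intro j t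
        rw [hg_conj]
        simp only [hgdef]
        have hα1 : α ^ ((j + t : Fin L) : ℕ) = α ^ ((j : ℕ) + (t : ℕ)) := by
          rw [Fin.val_add, hαmod]
        have hω1 : ω ^ ((((j + t : Fin L) : ℕ) : ℤ) * d)
            = ω ^ ((((j : ℕ) + (t : ℕ) : ℕ) : ℤ) * d) := by
          apply aux_zpow_mod hω0 hωLz
          have hmm : ((((j + t : Fin L) : ℕ) : ℤ)) % (L : ℤ)
              = ((((j : ℕ) + (t : ℕ) : ℕ) : ℤ)) % (L : ℤ) := by
            rw [Fin.val_add]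
            push_cast
            rw [Int.emod_emod_of_dvd _ dvd_rfl]
          exact Int.ModEq.mul_right d hmm
        rw [hα1, hω1]
        have e1 : χ (α ^ ((j : ℕ) + (t : ℕ)) * β) * χ (-(α ^ (j : ℕ) * β))
            = χ (α ^ (j : ℕ) * (β * (α ^ (t : ℕ) - 1))) := by
          rw [← χ_add]
          congr 1
          rw [pow_add]
          ring
        have e2 : ω ^ ((((j : ℕ) + (t : ℕ) : ℕ) : ℤ) * d) * ω ^ (-(((j : ℕ) : ℤ) * d))
            = ω ^ (((t : ℕ) : ℤ) * d) := by
          rw [← zpow_add₀ hω0]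
          congr 1
          push_cast
          ring
        rw [mul_mul_mul_comm, e1, e2]
      have main : S * conj S =
          ∑ t : Fin L, (∑ j : Fin L, χ (α ^ (j : ℕ) * (β * (α ^ (t : ℕ) - 1))))
            * ω ^ (((t : ℕ) : ℤ) * d) := by
        calc S * conj S = ∑ j : Fin L, S * conj (g j) := by
              rw [hSdef, map_sum, Finset.mul_sum]
          _ = ∑ j : Fin L, ∑ t : Fin L, g (j + t) * conj (g j) := by
              refine Finset.sum_congr rfl fun j _ => ?_
              conv_lhs => rw [hshift j]
              rw [Finset.sum_mul]
          _ = ∑ j : Fin L, ∑ t : Fin L,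
                χ (α ^ (j : ℕ) * (β * (α ^ (t : ℕ) - 1))) * ω ^ (((t : ℕ) : ℤ) * d) := by
              exact Finset.sum_congr rfl fun j _ => Finset.sum_congr rfl fun t _ => hgg j t
          _ = ∑ t : Fin L, ∑ j : Fin L,
                χ (α ^ (j : ℕ) * (β * (α ^ (t : ℕ) - 1))) * ω ^ (((t : ℕ) : ℤ) * d) :=
              Finset.sum_comm
          _ = _ := by
              refine Finset.sum_congr rfl fun t _ => ?_
              rw [Finset.sum_mul]
      have h0term : (∑ j : Fin L, χ (α ^ (j : ℕ) * (β * (α ^ ((0 : Fin L) : ℕ) - 1))))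
          * ω ^ ((((0 : Fin L) : ℕ) : ℤ) * d) = (L : ℂ) := by
        have hv0 : ((0 : Fin L) : ℕ) = 0 := rfl
        rw [hv0]
        simp only [pow_zero, sub_self, mul_zero, χ_zero, Nat.cast_zero, zero_mul, zpow_zero,
          mul_one, Finset.sum_const, Finset.card_univ, Fintype.card_fin, nsmul_eq_mul, mul_one]
      have herase : ∑ t ∈ Finset.univ.erase (0 : Fin L),
          (∑ j : Fin L, χ (α ^ (j : ℕ) * (β * (α ^ (t : ℕ) - 1))))
            * ω ^ (((t : ℕ) : ℤ) * d) = 1 := by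
        have hterm : ∀ t ∈ Finset.univ.erase (0 : Fin L),
            (∑ j : Fin L, χ (α ^ (j : ℕ) * (β * (α ^ (t : ℕ) - 1))))
              * ω ^ (((t : ℕ) : ℤ) * d) = -(ω ^ (((t : ℕ) : ℤ) * d)) := by
          intro t ht
          have htne : (t : ℕ) ≠ 0 := by
            intro h
            exact (Finset.mem_erase.mp ht).1 (Fin.ext h)
          have hα1 : α ^ (t : ℕ) ≠ 1 := by
            intro h
            have := (hαpow_one _).mp h
            have := Nat.eq_zero_of_dvd_of_lt this t.isLt
            exact htne this
          have hγ : β * (α ^ (t : ℕ) - 1) ≠ 0 :=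
            mul_ne_zero hβ (sub_ne_zero.mpr hα1)
          rw [sum_chi_gamma _ hγ]
          ring
        rw [Finset.sum_congr rfl hterm]
        have hfull : ω ^ ((((0 : Fin L) : ℕ) : ℤ) * d)
            + ∑ t ∈ Finset.univ.erase (0 : Fin L), ω ^ (((t : ℕ) : ℤ) * d)
            = ∑ t : Fin L, ω ^ (((t : ℕ) : ℤ) * d) :=
          Finset.add_sum_erase (Finset.univ : Finset (Fin L))
            (fun t : Fin L => ω ^ (((t : ℕ) : ℤ) * d)) (Finset.mem_univ 0)
        rw [geom hndd] at hfull
        have hv0 : ((0 : Fin L) : ℕ) = 0 := rfl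
        rw [hv0] at hfull
        simp only [Nat.cast_zero, zero_mul, zpow_zero] at hfull
        rw [Finset.sum_neg_distrib]
        linear_combination -hfull
      have hSS : S * conj S = (L : ℂ) + 1 := by
        rw [main, ← Finset.add_sum_erase _ _ (Finset.mem_univ (0 : Fin L)), h0term, herase]
      have hnormSq : Complex.normSq S = (L : ℝ) + 1 := by
        have h1 : ((Complex.normSq S : ℝ) : ℂ) = ((L : ℝ) : ℂ) + 1 := by
          rw [← Complex.mul_conj, hSS]
          norm_num
        exact_mod_cast h1
      have habsS : ‖S‖ = Real.sqrt ((L : ℝ) + 1) := by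
        rw [Complex.norm_def, hnormSq]
      rw [habsS]
      linarith

end
end
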